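/- arXiv:2006.03639 — 7 statements merged into one kernel-verified Lean document; each statement's English description precedes it below -/
import Mathlib

section
/- Let N be a natural number, let f : ℝ → ℝ and Φ_0, Φ_1, ..., Φ_{N+1} : ℝ → ℝ be infinitely differentiable functions. Define Ψ(t) = −∑_{i=0}^{N} f^{(i)}(t) · ∑_{j=0}^{N−i} (−1)^j Φ_{i+j+1}^{(j)}(t) and Γ(t) = ∑_{j=0}^{N+1} (−1)^j Φ_j^{(j)}(t), where g^{(k)} denotes the k-th derivative of g. Then for all t ∈ ℝ: Ψ'(t) = f(t) Γ(t) − ∑_{i=0}^{N+1} f^{(i)}(t) Φ_i(t). -/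
open Finset

/-- Purely algebraic telescoping identity. -/
lemma telescope_aux (N : ℕ) (a : ℕ → ℝ) (d : ℕ → ℕ → ℝ) :
    -∑ i ∈ Finset.range (N + 1), (a (i + 1) * ∑ j ∈ Finset.range (N - i + 1), d j (i + j + 1))
      + ∑ i ∈ Finset.range (N + 1), (a i * ∑ j ∈ Finset.range (N - i + 1), d (j + 1) (i + j + 1))
    = a 0 * ∑ j ∈ Finset.range (N + 2), d j j
      - ∑ i ∈ Finset.range (N + 2), a i * d 0 i := by
  set T : ℕ → ℝ := fun i => ∑ k ∈ Finset.range (N + 2 - i), d k (i + k) with hT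
  have h1 : ∀ i ∈ Finset.range (N + 1),
      a (i + 1) * ∑ j ∈ Finset.range (N - i + 1), d j (i + j + 1) = a (i + 1) * T (i + 1) := by
    intro i hi
    rw [Finset.mem_range] at hi
    congr 1
    rw [hT]
    simp only
    rw [show N + 2 - (i + 1) = N - i + 1 by omega]
    exact Finset.sum_congr rfl fun j _ => by rw [show i + 1 + j = i + j + 1 by omega]
  have h2 : ∀ i ∈ Finset.range (N + 1),
      a i * ∑ j ∈ Finset.range (N - i + 1), d (j + 1) (i + j + 1) = a i * (T i - d 0 i) := by
    intro i hi
    rw [Finset.mem_range] at hi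
    have hTi : T i = (∑ j ∈ Finset.range (N - i + 1), d (j + 1) (i + j + 1)) + d 0 i := by
      rw [hT]
      simp only
      rw [show N + 2 - i = (N - i + 1) + 1 by omega, Finset.sum_range_succ']
      congr 1
    rw [hTi]
    ring
  rw [Finset.sum_congr rfl h1, Finset.sum_congr rfl h2]
  have e1 : ∑ i ∈ Finset.range (N + 1), a (i + 1) * T (i + 1)
      = ∑ i ∈ Finset.range (N + 2), a i * T i - a 0 * T 0 := by
    rw [Finset.sum_range_succ' (fun i => a i * T i) (N + 1)]
    ring
  have e2 : ∑ i ∈ Finset.range (N + 1), a i * (T i - d 0 i)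
      = (∑ i ∈ Finset.range (N + 2), a i * T i - a (N + 1) * T (N + 1))
        - ∑ i ∈ Finset.range (N + 1), a i * d 0 i := by
    simp only [mul_sub, Finset.sum_sub_distrib, Finset.sum_range_succ]
    ring
  rw [e1, e2]
  have hT0 : T 0 = ∑ j ∈ Finset.range (N + 2), d j j := by
    rw [hT]; simp
  have hTN : T (N + 1) = d 0 (N + 1) := by
    rw [hT]
    simp only
    rw [show N + 2 - (N + 1) = 1 by omega]
    simp
  rw [hT0, hTN, Finset.sum_range_succ (fun i => a i * d 0 i) (N + 1)]
  ring

private lemma hasDerivAt_iteratedDeriv {g : ℝ → ℝ} (hg : ContDiff ℝ (⊤ : ℕ∞) g) (n : ℕ) (t : ℝ) :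
    HasDerivAt (iteratedDeriv n g) (iteratedDeriv (n + 1) g t) t := by
  have hd : Differentiable ℝ (iteratedDeriv n g) := by
    apply hg.differentiable_iteratedDeriv n
    exact_mod_cast (lt_top_iff_ne_top.mpr (by simp) : (n : ℕ∞) < ⊤)
  have := (hd t).hasDerivAt
  rwa [show deriv (iteratedDeriv n g) t = iteratedDeriv (n + 1) g t by
    rw [iteratedDeriv_succ]] at this

/-- Computational core of the main theorem: with
`Ψ(t) = -∑_{i=0}^{N} f⁽ⁱ⁾(t) ∑_{j=0}^{N-i} (-1)^j Φ_{i+j+1}⁽ʲ⁾(t)` and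
`Γ(t) = ∑_{j=0}^{N+1} (-1)^j Φ_j⁽ʲ⁾(t)`, one has
`Ψ'(t) = f(t) Γ(t) - ∑_{i=0}^{N+1} f⁽ⁱ⁾(t) Φ_i(t)`. -/
theorem flux_trivial_identity (N : ℕ) (f : ℝ → ℝ) (Φ : ℕ → ℝ → ℝ) (Ψ Γ : ℝ → ℝ)
    (hf : ContDiff ℝ (⊤ : ℕ∞) f)
    (hΦ : ∀ i ≤ N + 1, ContDiff ℝ (⊤ : ℕ∞) (Φ i))
    (hΨ : ∀ t, Ψ t = -∑ i ∈ Finset.range (N + 1), iteratedDeriv i f t *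
        ∑ j ∈ Finset.range (N - i + 1), (-1 : ℝ) ^ j * iteratedDeriv j (Φ (i + j + 1)) t)
    (hΓ : ∀ t, Γ t = ∑ j ∈ Finset.range (N + 2), (-1 : ℝ) ^ j * iteratedDeriv j (Φ j) t) :
    ∀ t : ℝ, deriv Ψ t =
      f t * Γ t - ∑ i ∈ Finset.range (N + 2), iteratedDeriv i f t * Φ i t := by
  intro t
  have hΨfun : Ψ = fun s => -∑ i ∈ Finset.range (N + 1), iteratedDeriv i f s *
      ∑ j ∈ Finset.range (N - i + 1), (-1 : ℝ) ^ j * iteratedDeriv j (Φ (i + j + 1)) s :=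
    funext hΨ
  -- derivative of each inner sum
  have hinner : ∀ i ∈ Finset.range (N + 1),
      HasDerivAt (fun s => ∑ j ∈ Finset.range (N - i + 1),
          (-1 : ℝ) ^ j * iteratedDeriv j (Φ (i + j + 1)) s)
        (∑ j ∈ Finset.range (N - i + 1),
          (-1 : ℝ) ^ j * iteratedDeriv (j + 1) (Φ (i + j + 1)) t) t := by
    intro i hi
    rw [Finset.mem_range] at hi
    apply HasDerivAt.fun_sum
    intro j hj
    rw [Finset.mem_range] at hj
    have hij : i + j + 1 ≤ N + 1 := by omega
    exact (hasDerivAt_iteratedDeriv (hΦ _ hij) j t).const_mul _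
  have houter : ∀ i ∈ Finset.range (N + 1),
      HasDerivAt (fun s => iteratedDeriv i f s *
          ∑ j ∈ Finset.range (N - i + 1), (-1 : ℝ) ^ j * iteratedDeriv j (Φ (i + j + 1)) s)
        (iteratedDeriv (i + 1) f t *
            (∑ j ∈ Finset.range (N - i + 1), (-1 : ℝ) ^ j * iteratedDeriv j (Φ (i + j + 1)) t)
          + iteratedDeriv i f t *
            ∑ j ∈ Finset.range (N - i + 1), (-1 : ℝ) ^ j * iteratedDeriv (j + 1) (Φ (i + j + 1)) t)
        t := by
    intro i hi
    exact (hasDerivAt_iteratedDeriv hf i t).mul (hinner i hi)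
  have hΨderiv : HasDerivAt Ψ
      (-∑ i ∈ Finset.range (N + 1),
        (iteratedDeriv (i + 1) f t *
            (∑ j ∈ Finset.range (N - i + 1), (-1 : ℝ) ^ j * iteratedDeriv j (Φ (i + j + 1)) t)
          + iteratedDeriv i f t *
            ∑ j ∈ Finset.range (N - i + 1), (-1 : ℝ) ^ j * iteratedDeriv (j + 1) (Φ (i + j + 1)) t))
      t := by
    rw [hΨfun]
    exact (HasDerivAt.fun_sum houter).neg
  rw [hΨderiv.deriv]
  -- now the algebraic identity
  have key := telescope_aux N (fun i => iteratedDeriv i f t)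
    (fun k m => (-1 : ℝ) ^ k * iteratedDeriv k (Φ m) t)
  have hd0 : ∀ m, (-1 : ℝ) ^ 0 * iteratedDeriv 0 (Φ m) t = Φ m t := by
    intro m; simp [iteratedDeriv_zero]
  have hflip : ∀ i, ∑ j ∈ Finset.range (N - i + 1),
      (-1 : ℝ) ^ j * iteratedDeriv (j + 1) (Φ (i + j + 1)) t
      = -∑ j ∈ Finset.range (N - i + 1),
          (-1 : ℝ) ^ (j + 1) * iteratedDeriv (j + 1) (Φ (i + j + 1)) t := by
    intro i
    rw [← Finset.sum_neg_distrib]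
    exact Finset.sum_congr rfl fun j _ => by ring
  calc -∑ i ∈ Finset.range (N + 1),
        (iteratedDeriv (i + 1) f t *
            (∑ j ∈ Finset.range (N - i + 1), (-1 : ℝ) ^ j * iteratedDeriv j (Φ (i + j + 1)) t)
          + iteratedDeriv i f t *
            ∑ j ∈ Finset.range (N - i + 1), (-1 : ℝ) ^ j * iteratedDeriv (j + 1) (Φ (i + j + 1)) t)
      = -∑ i ∈ Finset.range (N + 1), (iteratedDeriv (i + 1) f t *
            ∑ j ∈ Finset.range (N - i + 1), (-1 : ℝ) ^ j * iteratedDeriv j (Φ (i + j + 1)) t)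
        + ∑ i ∈ Finset.range (N + 1), (iteratedDeriv i f t *
            ∑ j ∈ Finset.range (N - i + 1), (-1 : ℝ) ^ (j + 1)
              * iteratedDeriv (j + 1) (Φ (i + j + 1)) t) := by
        simp only [hflip, mul_neg, Finset.sum_add_distrib, Finset.sum_neg_distrib]
        ring
    _ = iteratedDeriv 0 f t * ∑ j ∈ Finset.range (N + 2),
          (-1 : ℝ) ^ j * iteratedDeriv j (Φ j) t
        - ∑ i ∈ Finset.range (N + 2), iteratedDeriv i f t *
            ((-1 : ℝ) ^ 0 * iteratedDeriv 0 (Φ i) t) := key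
    _ = f t * Γ t - ∑ i ∈ Finset.range (N + 2), iteratedDeriv i f t * Φ i t := by
        rw [iteratedDeriv_zero, hΓ t]
        congr 1
        exact Finset.sum_congr rfl fun i _ => by rw [hd0]
end

section
/- Let σ ∈ ℝ with σ² = 1 and let u : ℝ³ → ℝ be infinitely differentiable in (t, x, y). Define G(t,x,y) = ∂_x∂_t u + ∂_x( u ∂_x u + ∂_x³ u ) + σ ∂_y² u. Then for every (t,x,y) ∈ ℝ³: u = ∂_y( y u − (1/2) y² ∂_y u ) − ∂_x( (1/2) σ y² ( ∂_t u + u ∂_x u + ∂_x³ u ) ) + (1/2) σ y² G(t,x,y). -/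
/-- Partial derivative with respect to `t` of a function of `(t,x,y)`. -/
noncomputable def Dt (u : ℝ → ℝ → ℝ → ℝ) : ℝ → ℝ → ℝ → ℝ :=
  fun t x y => deriv (fun s => u s x y) t

/-- Partial derivative with respect to `x`. -/
noncomputable def Dx (u : ℝ → ℝ → ℝ → ℝ) : ℝ → ℝ → ℝ → ℝ :=
  fun t x y => deriv (fun s => u t s y) x

/-- Partial derivative with respect to `y`. -/
noncomputable def Dy (u : ℝ → ℝ → ℝ → ℝ) : ℝ → ℝ → ℝ → ℝ :=
  fun t x y => deriv (fun s => u t x s) y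

/-- Joint infinite differentiability of a function of `(t,x,y)`. -/
def Smooth3 (u : ℝ → ℝ → ℝ → ℝ) : Prop :=
  ContDiff ℝ (⊤ : ℕ∞) fun p : ℝ × ℝ × ℝ => u p.1 p.2.1 p.2.2

noncomputable def J3 (u : ℝ → ℝ → ℝ → ℝ) : ℝ × ℝ × ℝ → ℝ := fun p => u p.1 p.2.1 p.2.2

lemma smooth_partialV (u : ℝ → ℝ → ℝ → ℝ) (hu : Smooth3 u) (v : ℝ × ℝ × ℝ) :
    ContDiff ℝ (⊤ : ℕ∞) (fun p => fderiv ℝ (J3 u) p v) :=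
  (hu.fderiv_right (by exact_mod_cast le_top)).clm_apply contDiff_const

lemma hasDerivAt_t (u : ℝ → ℝ → ℝ → ℝ) (hu : Smooth3 u) (t x y : ℝ) :
    HasDerivAt (fun s => u s x y) (fderiv ℝ (J3 u) (t,x,y) (1,0,0)) t := by
  have hU := (hu.differentiable (by simp) (t,x,y)).hasFDerivAt
  have hL : HasDerivAt (fun s => ((s,x,y) : ℝ×ℝ×ℝ)) (1,0,0) t :=
    (hasDerivAt_id t).prodMk ((hasDerivAt_const t x).prodMk (hasDerivAt_const t y))
  exact hU.comp_hasDerivAt t hL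

lemma hasDerivAt_x (u : ℝ → ℝ → ℝ → ℝ) (hu : Smooth3 u) (t x y : ℝ) :
    HasDerivAt (fun s => u t s y) (fderiv ℝ (J3 u) (t,x,y) (0,1,0)) x := by
  have hU := (hu.differentiable (by simp) (t,x,y)).hasFDerivAt
  have hL : HasDerivAt (fun s => ((t,s,y) : ℝ×ℝ×ℝ)) (0,1,0) x :=
    (hasDerivAt_const x t).prodMk ((hasDerivAt_id x).prodMk (hasDerivAt_const x y))
  exact hU.comp_hasDerivAt x hL

lemma hasDerivAt_y (u : ℝ → ℝ → ℝ → ℝ) (hu : Smooth3 u) (t x y : ℝ) :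
    HasDerivAt (fun s => u t x s) (fderiv ℝ (J3 u) (t,x,y) (0,0,1)) y := by
  have hU := (hu.differentiable (by simp) (t,x,y)).hasFDerivAt
  have hL : HasDerivAt (fun s => ((t,x,s) : ℝ×ℝ×ℝ)) (0,0,1) y :=
    (hasDerivAt_const y t).prodMk ((hasDerivAt_const y x).prodMk (hasDerivAt_id y))
  exact hU.comp_hasDerivAt y hL

lemma Dt_eq (u : ℝ → ℝ → ℝ → ℝ) (hu : Smooth3 u) (t x y : ℝ) :
    Dt u t x y = fderiv ℝ (J3 u) (t,x,y) (1,0,0) := (hasDerivAt_t u hu t x y).deriv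
lemma Dx_eq (u : ℝ → ℝ → ℝ → ℝ) (hu : Smooth3 u) (t x y : ℝ) :
    Dx u t x y = fderiv ℝ (J3 u) (t,x,y) (0,1,0) := (hasDerivAt_x u hu t x y).deriv
lemma Dy_eq (u : ℝ → ℝ → ℝ → ℝ) (hu : Smooth3 u) (t x y : ℝ) :
    Dy u t x y = fderiv ℝ (J3 u) (t,x,y) (0,0,1) := (hasDerivAt_y u hu t x y).deriv

lemma hasDerivAt_Dt (u : ℝ → ℝ → ℝ → ℝ) (hu : Smooth3 u) (t x y : ℝ) :
    HasDerivAt (fun s => u s x y) (Dt u t x y) t := by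
  rw [Dt_eq u hu]; exact hasDerivAt_t u hu t x y
lemma hasDerivAt_Dx (u : ℝ → ℝ → ℝ → ℝ) (hu : Smooth3 u) (t x y : ℝ) :
    HasDerivAt (fun s => u t s y) (Dx u t x y) x := by
  rw [Dx_eq u hu]; exact hasDerivAt_x u hu t x y
lemma hasDerivAt_Dy (u : ℝ → ℝ → ℝ → ℝ) (hu : Smooth3 u) (t x y : ℝ) :
    HasDerivAt (fun s => u t x s) (Dy u t x y) y := by
  rw [Dy_eq u hu]; exact hasDerivAt_y u hu t x y

lemma smooth3_Dt (u : ℝ → ℝ → ℝ → ℝ) (hu : Smooth3 u) : Smooth3 (Dt u) := by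
  have h : (fun p : ℝ×ℝ×ℝ => Dt u p.1 p.2.1 p.2.2) = fun p => fderiv ℝ (J3 u) p (1,0,0) :=
    funext fun p => Dt_eq u hu p.1 p.2.1 p.2.2
  unfold Smooth3; rw [h]; exact smooth_partialV u hu _
lemma smooth3_Dx (u : ℝ → ℝ → ℝ → ℝ) (hu : Smooth3 u) : Smooth3 (Dx u) := by
  have h : (fun p : ℝ×ℝ×ℝ => Dx u p.1 p.2.1 p.2.2) = fun p => fderiv ℝ (J3 u) p (0,1,0) :=
    funext fun p => Dx_eq u hu p.1 p.2.1 p.2.2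
  unfold Smooth3; rw [h]; exact smooth_partialV u hu _
lemma smooth3_Dy (u : ℝ → ℝ → ℝ → ℝ) (hu : Smooth3 u) : Smooth3 (Dy u) := by
  have h : (fun p : ℝ×ℝ×ℝ => Dy u p.1 p.2.1 p.2.2) = fun p => fderiv ℝ (J3 u) p (0,0,1) :=
    funext fun p => Dy_eq u hu p.1 p.2.1 p.2.2
  unfold Smooth3; rw [h]; exact smooth_partialV u hu _


/-- Divergence identity for the conserved density `u` of the KP equation
`G = u_{tx} + (u u_x + u_{xxx})_x + σ u_{yy}`:
`u = D_y(y u - (1/2) y² u_y) - D_x((1/2) σ y² (u_t + u u_x + u_{xxx})) + (1/2) σ y² G`. -/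
theorem kp_mass_divergence_identity (σ : ℝ) (hσ : σ ^ 2 = 1)
    (u : ℝ → ℝ → ℝ → ℝ) (hu : Smooth3 u)
    (G : ℝ → ℝ → ℝ → ℝ)
    (hG : ∀ t x y, G t x y = Dx (Dt u) t x y
      + Dx (fun t x y => u t x y * Dx u t x y + Dx (Dx (Dx u)) t x y) t x y
      + σ * Dy (Dy u) t x y) :
    ∀ t x y : ℝ,
      u t x y =
        Dy (fun t x y => y * u t x y - (1 / 2) * y ^ 2 * Dy u t x y) t x y
        - Dx (fun t x y => (1 / 2) * σ * y ^ 2 *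
            (Dt u t x y + u t x y * Dx u t x y + Dx (Dx (Dx u)) t x y)) t x y
        + (1 / 2) * σ * y ^ 2 * G t x y := by

  have hDt : Smooth3 (Dt u) := smooth3_Dt u hu
  have hDx : Smooth3 (Dx u) := smooth3_Dx u hu
  have hDxx : Smooth3 (Dx (Dx u)) := smooth3_Dx _ hDx
  have hDxxx : Smooth3 (Dx (Dx (Dx u))) := smooth3_Dx _ hDxx
  have hDy : Smooth3 (Dy u) := smooth3_Dy u hu
  have hP : Smooth3 (fun t x y => u t x y * Dx u t x y + Dx (Dx (Dx u)) t x y) :=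
    ContDiff.add (ContDiff.mul hu hDx) hDxxx
  intro t x y
  -- Term 1
  have h1 : HasDerivAt (fun s => s * u t x s) (1 * u t x y + y * Dy u t x y) y :=
    (hasDerivAt_id y).mul (hasDerivAt_Dy u hu t x y)
  have h2 : HasDerivAt (fun s => (1 / 2) * s ^ 2 * Dy u t x s)
      ((1 / 2) * (2 * y ^ 1) * Dy u t x y + (1 / 2) * y ^ 2 * Dy (Dy u) t x y) y := by
    have h := (((hasDerivAt_pow 2 y).const_mul ((1:ℝ)/2)).fun_mul (hasDerivAt_Dy (Dy u) hDy t x y))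
    exact h.congr_deriv (by norm_num)
  have T1 : Dy (fun t x y => y * u t x y - (1 / 2) * y ^ 2 * Dy u t x y) t x y
      = u t x y - (1 / 2) * y ^ 2 * Dy (Dy u) t x y := by
    have h3 := (h1.fun_sub h2).deriv
    simp only [Dy] at h3 ⊢
    rw [h3]; ring
  -- Term 2
  have hF : HasDerivAt
      (fun s => Dt u t s y + (u t s y * Dx u t s y + Dx (Dx (Dx u)) t s y))
      (Dx (Dt u) t x y
        + Dx (fun t x y => u t x y * Dx u t x y + Dx (Dx (Dx u)) t x y) t x y) x :=
    (hasDerivAt_Dx (Dt u) hDt t x y).add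
      (hasDerivAt_Dx (fun t x y => u t x y * Dx u t x y + Dx (Dx (Dx u)) t x y) hP t x y)
  have hF' : HasDerivAt
      (fun s => (1 / 2) * σ * y ^ 2 *
        (Dt u t s y + u t s y * Dx u t s y + Dx (Dx (Dx u)) t s y))
      ((1 / 2) * σ * y ^ 2 * (Dx (Dt u) t x y
        + Dx (fun t x y => u t x y * Dx u t x y + Dx (Dx (Dx u)) t x y) t x y)) x := by
    have h := hF.const_mul ((1 / 2) * σ * y ^ 2)
    have he : (fun s => (1 / 2) * σ * y ^ 2 *
          (Dt u t s y + u t s y * Dx u t s y + Dx (Dx (Dx u)) t s y))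
        = (fun s => (1 / 2) * σ * y ^ 2 *
          (Dt u t s y + (u t s y * Dx u t s y + Dx (Dx (Dx u)) t s y))) := by
      funext s; ring
    rw [he]
    exact h
  have T2 : Dx (fun t x y => (1 / 2) * σ * y ^ 2 *
        (Dt u t x y + u t x y * Dx u t x y + Dx (Dx (Dx u)) t x y)) t x y
      = (1 / 2) * σ * y ^ 2 * (Dx (Dt u) t x y
        + Dx (fun t x y => u t x y * Dx u t x y + Dx (Dx (Dx u)) t x y) t x y) := by
    have h3 := hF'.deriv
    simp only [Dx] at h3 ⊢
    exact h3
  rw [T1, T2, hG t x y]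
  linear_combination (-(1 / 2) * y ^ 2 * Dy (Dy u) t x y) * hσ
end

section
/- Let σ ∈ ℝ with σ² = 1 and let u : ℝ³ → ℝ be infinitely differentiable in (t, x, y). Define G(t,x,y) = ∂_x∂_t u + ∂_x( u ∂_x u + ∂_x³ u ) + σ ∂_y² u. Then for every (t,x,y) ∈ ℝ³: y u = ∂_y( (1/2) y² u − (1/6) y³ ∂_y u ) − ∂_x( (1/6) σ y³ ( ∂_t u + u ∂_x u + ∂_x³ u ) ) + (1/6) σ y³ G(t,x,y). -/
lemma smooth3_hasDerivAt_t (u : ℝ → ℝ → ℝ → ℝ) (hu : Smooth3 u) (t x y : ℝ) :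
    HasDerivAt (fun s => u s x y)
      (fderiv ℝ (fun p : ℝ × ℝ × ℝ => u p.1 p.2.1 p.2.2) (t, x, y) (1, 0, 0)) t := by
  have hd := (hu.differentiable (by simp) (t, x, y)).hasFDerivAt
  have hl : HasDerivAt (fun s : ℝ => ((s, x, y) : ℝ × ℝ × ℝ)) ((1, 0, 0) : ℝ × ℝ × ℝ) t :=
    HasDerivAt.prodMk (hasDerivAt_id t) (HasDerivAt.prodMk (hasDerivAt_const t x) (hasDerivAt_const t y))
  exact hd.comp_hasDerivAt t hl

lemma smooth3_hasDerivAt_x (u : ℝ → ℝ → ℝ → ℝ) (hu : Smooth3 u) (t x y : ℝ) :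
    HasDerivAt (fun s => u t s y)
      (fderiv ℝ (fun p : ℝ × ℝ × ℝ => u p.1 p.2.1 p.2.2) (t, x, y) (0, 1, 0)) x := by
  have hd := (hu.differentiable (by simp) (t, x, y)).hasFDerivAt
  have hl : HasDerivAt (fun s : ℝ => ((t, s, y) : ℝ × ℝ × ℝ)) ((0, 1, 0) : ℝ × ℝ × ℝ) x :=
    HasDerivAt.prodMk (hasDerivAt_const x t) (HasDerivAt.prodMk (hasDerivAt_id x) (hasDerivAt_const x y))
  exact hd.comp_hasDerivAt x hl

lemma smooth3_hasDerivAt_y (u : ℝ → ℝ → ℝ → ℝ) (hu : Smooth3 u) (t x y : ℝ) :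
    HasDerivAt (fun s => u t x s)
      (fderiv ℝ (fun p : ℝ × ℝ × ℝ => u p.1 p.2.1 p.2.2) (t, x, y) (0, 0, 1)) y := by
  have hd := (hu.differentiable (by simp) (t, x, y)).hasFDerivAt
  have hl : HasDerivAt (fun s : ℝ => ((t, x, s) : ℝ × ℝ × ℝ)) ((0, 0, 1) : ℝ × ℝ × ℝ) y :=
    HasDerivAt.prodMk (hasDerivAt_const y t) (HasDerivAt.prodMk (hasDerivAt_const y x) (hasDerivAt_id y))
  exact hd.comp_hasDerivAt y hl

lemma smooth3_fderiv_apply (u : ℝ → ℝ → ℝ → ℝ) (hu : Smooth3 u) (v : ℝ × ℝ × ℝ) :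
    ContDiff ℝ (⊤ : ℕ∞)
      (fun p : ℝ × ℝ × ℝ => fderiv ℝ (fun p : ℝ × ℝ × ℝ => u p.1 p.2.1 p.2.2) p v) :=
  (hu.fderiv_right (by simp)).clm_apply contDiff_const

lemma Smooth3.dt {u : ℝ → ℝ → ℝ → ℝ} (hu : Smooth3 u) : Smooth3 (Dt u) := by
  have h : (fun p : ℝ × ℝ × ℝ => Dt u p.1 p.2.1 p.2.2)
      = fun p : ℝ × ℝ × ℝ =>
        fderiv ℝ (fun p : ℝ × ℝ × ℝ => u p.1 p.2.1 p.2.2) p (1, 0, 0) := by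
    funext p
    exact (smooth3_hasDerivAt_t u hu p.1 p.2.1 p.2.2).deriv
  unfold Smooth3
  rw [h]
  exact smooth3_fderiv_apply u hu _

lemma Smooth3.dx {u : ℝ → ℝ → ℝ → ℝ} (hu : Smooth3 u) : Smooth3 (Dx u) := by
  have h : (fun p : ℝ × ℝ × ℝ => Dx u p.1 p.2.1 p.2.2)
      = fun p : ℝ × ℝ × ℝ =>
        fderiv ℝ (fun p : ℝ × ℝ × ℝ => u p.1 p.2.1 p.2.2) p (0, 1, 0) := by
    funext p
    exact (smooth3_hasDerivAt_x u hu p.1 p.2.1 p.2.2).deriv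
  unfold Smooth3
  rw [h]
  exact smooth3_fderiv_apply u hu _

lemma Smooth3.dy {u : ℝ → ℝ → ℝ → ℝ} (hu : Smooth3 u) : Smooth3 (Dy u) := by
  have h : (fun p : ℝ × ℝ × ℝ => Dy u p.1 p.2.1 p.2.2)
      = fun p : ℝ × ℝ × ℝ =>
        fderiv ℝ (fun p : ℝ × ℝ × ℝ => u p.1 p.2.1 p.2.2) p (0, 0, 1) := by
    funext p
    exact (smooth3_hasDerivAt_y u hu p.1 p.2.1 p.2.2).deriv
  unfold Smooth3
  rw [h]
  exact smooth3_fderiv_apply u hu _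

/-- Divergence identity for the conserved density `y u` of the KP equation
`G = u_{tx} + (u u_x + u_{xxx})_x + σ u_{yy}`:
`y u = D_y((1/2) y² u - (1/6) y³ u_y) - D_x((1/6) σ y³ (u_t + u u_x + u_{xxx})) + (1/6) σ y³ G`. -/
theorem kp_ymoment_divergence_identity (σ : ℝ) (hσ : σ ^ 2 = 1)
    (u : ℝ → ℝ → ℝ → ℝ) (hu : Smooth3 u)
    (G : ℝ → ℝ → ℝ → ℝ)
    (hG : ∀ t x y, G t x y = Dx (Dt u) t x y
      + Dx (fun t x y => u t x y * Dx u t x y + Dx (Dx (Dx u)) t x y) t x y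
      + σ * Dy (Dy u) t x y) :
    ∀ t x y : ℝ,
      y * u t x y =
        Dy (fun t x y => (1 / 2) * y ^ 2 * u t x y - (1 / 6) * y ^ 3 * Dy u t x y) t x y
        - Dx (fun t x y => (1 / 6) * σ * y ^ 3 *
            (Dt u t x y + u t x y * Dx u t x y + Dx (Dx (Dx u)) t x y)) t x y
        + (1 / 6) * σ * y ^ 3 * G t x y := by
  intro t x y
  -- derivatives in y
  have h1 : HasDerivAt (fun s => u t x s) (Dy u t x y) y := hasDerivAt_Dy u hu t x y
  have h2 : HasDerivAt (fun s => Dy u t x s) (Dy (Dy u) t x y) y :=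
    hasDerivAt_Dy _ hu.dy t x y
  have hA : HasDerivAt
      (fun s => (1 / 2) * s ^ 2 * u t x s - (1 / 6) * s ^ 3 * Dy u t x s)
      ((((1 : ℝ) / 2) * ((2 : ℕ) * y ^ 1) * u t x y + (1 / 2) * y ^ 2 * Dy u t x y)
        - (((1 : ℝ) / 6) * ((3 : ℕ) * y ^ 2) * Dy u t x y
            + (1 / 6) * y ^ 3 * Dy (Dy u) t x y)) y :=
    (((hasDerivAt_pow 2 y).const_mul (1 / 2 : ℝ)).mul h1).sub
      (((hasDerivAt_pow 3 y).const_mul (1 / 6 : ℝ)).mul h2)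
  have eA : Dy (fun t x y => (1 / 2) * y ^ 2 * u t x y - (1 / 6) * y ^ 3 * Dy u t x y) t x y
      = (((1 : ℝ) / 2) * ((2 : ℕ) * y ^ 1) * u t x y + (1 / 2) * y ^ 2 * Dy u t x y)
        - (((1 : ℝ) / 6) * ((3 : ℕ) * y ^ 2) * Dy u t x y
            + (1 / 6) * y ^ 3 * Dy (Dy u) t x y) := hA.deriv
  -- derivatives in x
  have ht : HasDerivAt (fun s => Dt u t s y) (Dx (Dt u) t x y) x :=
    hasDerivAt_Dx _ hu.dt t x y
  have hx1 : HasDerivAt (fun s => u t s y) (Dx u t x y) x := hasDerivAt_Dx u hu t x y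
  have hx2 : HasDerivAt (fun s => Dx u t s y) (Dx (Dx u) t x y) x :=
    hasDerivAt_Dx _ hu.dx t x y
  have hx4 : HasDerivAt (fun s => Dx (Dx (Dx u)) t s y) (Dx (Dx (Dx (Dx u))) t x y) x :=
    hasDerivAt_Dx _ hu.dx.dx.dx t x y
  have hMid : HasDerivAt
      (fun s => u t s y * Dx u t s y + Dx (Dx (Dx u)) t s y)
      ((Dx u t x y * Dx u t x y + u t x y * Dx (Dx u) t x y)
        + Dx (Dx (Dx (Dx u))) t x y) x := (hx1.mul hx2).add hx4
  have eMid : Dx (fun t x y => u t x y * Dx u t x y + Dx (Dx (Dx u)) t x y) t x y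
      = (Dx u t x y * Dx u t x y + u t x y * Dx (Dx u) t x y)
        + Dx (Dx (Dx (Dx u))) t x y := hMid.deriv
  have hB : HasDerivAt
      (fun s => (1 / 6) * σ * y ^ 3 *
        (Dt u t s y + u t s y * Dx u t s y + Dx (Dx (Dx u)) t s y))
      ((1 / 6) * σ * y ^ 3 *
        (Dx (Dt u) t x y
          + (Dx u t x y * Dx u t x y + u t x y * Dx (Dx u) t x y)
          + Dx (Dx (Dx (Dx u))) t x y)) x :=
    ((ht.add (hx1.mul hx2)).add hx4).const_mul _
  have eB : Dx (fun t x y => (1 / 6) * σ * y ^ 3 *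
        (Dt u t x y + u t x y * Dx u t x y + Dx (Dx (Dx u)) t x y)) t x y
      = (1 / 6) * σ * y ^ 3 *
        (Dx (Dt u) t x y
          + (Dx u t x y * Dx u t x y + u t x y * Dx (Dx u) t x y)
          + Dx (Dx (Dx (Dx u))) t x y) := hB.deriv
  rw [eA, eB, hG t x y, eMid]
  push_cast
  linear_combination (-(1 / 6) * y ^ 3 * Dy (Dy u) t x y) * hσ
end

section
/- Let σ ∈ ℝ with σ² = 1 and let u : ℝ³ → ℝ be infinitely differentiable in (t, x, y), satisfying the KP equation ∂_x∂_t u + ∂_x( u ∂_x u + ∂_x³ u ) + σ ∂_y² u = 0 everywhere on ℝ³. Suppose there exists R > 0 such that u(t,x,y) = 0 whenever x² + y² ≥ R². Then for every t ∈ ℝ: ∫_{ℝ²} u(t,x,y) dx dy = 0. -/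
open MeasureTheory

namespace KPaux

noncomputable def U3 (u : ℝ → ℝ → ℝ → ℝ) : ℝ × ℝ × ℝ → ℝ := fun p => u p.1 p.2.1 p.2.2

lemma dt_eq_fderiv {u : ℝ → ℝ → ℝ → ℝ} (hu : Smooth3 u) (t x y : ℝ) :
    Dt u t x y = fderiv ℝ (U3 u) (t, x, y) (1, 0, 0) := by
  have hL : HasDerivAt (fun s : ℝ => ((s, x, y) : ℝ × ℝ × ℝ)) (1, 0, 0) t :=
    (hasDerivAt_id t).prodMk ((hasDerivAt_const t x).prodMk (hasDerivAt_const t y))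
  have h := ((hu.differentiable (by simp) (t, x, y)).hasFDerivAt).comp_hasDerivAt t hL
  exact h.deriv

lemma dx_eq_fderiv {u : ℝ → ℝ → ℝ → ℝ} (hu : Smooth3 u) (t x y : ℝ) :
    Dx u t x y = fderiv ℝ (U3 u) (t, x, y) (0, 1, 0) := by
  have hL : HasDerivAt (fun s : ℝ => ((t, s, y) : ℝ × ℝ × ℝ)) (0, 1, 0) x :=
    (hasDerivAt_const x t).prodMk ((hasDerivAt_id x).prodMk (hasDerivAt_const x y))
  have h := ((hu.differentiable (by simp) (t, x, y)).hasFDerivAt).comp_hasDerivAt x hL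
  exact h.deriv

lemma dy_eq_fderiv {u : ℝ → ℝ → ℝ → ℝ} (hu : Smooth3 u) (t x y : ℝ) :
    Dy u t x y = fderiv ℝ (U3 u) (t, x, y) (0, 0, 1) := by
  have hL : HasDerivAt (fun s : ℝ => ((t, x, s) : ℝ × ℝ × ℝ)) (0, 0, 1) y :=
    (hasDerivAt_const y t).prodMk ((hasDerivAt_const y x).prodMk (hasDerivAt_id y))
  have h := ((hu.differentiable (by simp) (t, x, y)).hasFDerivAt).comp_hasDerivAt y hL
  exact h.deriv

lemma smooth3_fderiv_apply {u : ℝ → ℝ → ℝ → ℝ} (hu : Smooth3 u) (v : ℝ × ℝ × ℝ) :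
    ContDiff ℝ (⊤ : ℕ∞) fun p : ℝ × ℝ × ℝ => fderiv ℝ (U3 u) p v := by
  have h1 : ContDiff ℝ (⊤ : ℕ∞) (fderiv ℝ (U3 u)) := hu.fderiv_right (by simp)
  exact (ContinuousLinearMap.apply ℝ ℝ v).contDiff.comp h1

lemma _root_.Smooth3.dt_s11 {u : ℝ → ℝ → ℝ → ℝ} (hu : Smooth3 u) : Smooth3 (Dt u) := by
  have : (fun p : ℝ × ℝ × ℝ => Dt u p.1 p.2.1 p.2.2)
      = fun p => fderiv ℝ (U3 u) p (1, 0, 0) := by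
    funext p; exact dt_eq_fderiv hu p.1 p.2.1 p.2.2
  unfold Smooth3; rw [this]; exact smooth3_fderiv_apply hu _

lemma _root_.Smooth3.dx_s11 {u : ℝ → ℝ → ℝ → ℝ} (hu : Smooth3 u) : Smooth3 (Dx u) := by
  have : (fun p : ℝ × ℝ × ℝ => Dx u p.1 p.2.1 p.2.2)
      = fun p => fderiv ℝ (U3 u) p (0, 1, 0) := by
    funext p; exact dx_eq_fderiv hu p.1 p.2.1 p.2.2
  unfold Smooth3; rw [this]; exact smooth3_fderiv_apply hu _

lemma _root_.Smooth3.dy_s11 {u : ℝ → ℝ → ℝ → ℝ} (hu : Smooth3 u) : Smooth3 (Dy u) := by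
  have : (fun p : ℝ × ℝ × ℝ => Dy u p.1 p.2.1 p.2.2)
      = fun p => fderiv ℝ (U3 u) p (0, 0, 1) := by
    funext p; exact dy_eq_fderiv hu p.1 p.2.1 p.2.2
  unfold Smooth3; rw [this]; exact smooth3_fderiv_apply hu _

/-- x-slice smoothness -/
lemma slice_x {u : ℝ → ℝ → ℝ → ℝ} (hu : Smooth3 u) (t y : ℝ) :
    ContDiff ℝ (⊤ : ℕ∞) fun x => u t x y := by
  have : ContDiff ℝ (⊤ : ℕ∞) fun x : ℝ => ((t, x, y) : ℝ × ℝ × ℝ) :=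
    contDiff_const.prodMk (contDiff_id.prodMk contDiff_const)
  exact hu.comp this

lemma slice_y {u : ℝ → ℝ → ℝ → ℝ} (hu : Smooth3 u) (t x : ℝ) :
    ContDiff ℝ (⊤ : ℕ∞) fun y => u t x y := by
  have : ContDiff ℝ (⊤ : ℕ∞) fun y : ℝ => ((t, x, y) : ℝ × ℝ × ℝ) :=
    contDiff_const.prodMk (contDiff_const.prodMk contDiff_id)
  exact hu.comp this

lemma slice_xy {u : ℝ → ℝ → ℝ → ℝ} (hu : Smooth3 u) (t : ℝ) :
    Continuous fun p : ℝ × ℝ => u t p.1 p.2 := by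
  have : Continuous fun p : ℝ × ℝ => ((t, p.1, p.2) : ℝ × ℝ × ℝ) := by fun_prop
  exact (hu.continuous).comp this

/-- vanishing of derivatives on the open exterior region -/
lemma vanish_dt {u : ℝ → ℝ → ℝ → ℝ} {R : ℝ}
    (h : ∀ t x y, x ^ 2 + y ^ 2 > R ^ 2 → u t x y = 0) :
    ∀ t x y, x ^ 2 + y ^ 2 > R ^ 2 → Dt u t x y = 0 := by
  intro t x y hxy
  have : (fun s => u s x y) = fun _ => (0 : ℝ) := funext fun s => h s x y hxy
  show deriv (fun s => u s x y) t = 0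
  rw [this]; simp

lemma vanish_dx {u : ℝ → ℝ → ℝ → ℝ} {R : ℝ}
    (h : ∀ t x y, x ^ 2 + y ^ 2 > R ^ 2 → u t x y = 0) :
    ∀ t x y, x ^ 2 + y ^ 2 > R ^ 2 → Dx u t x y = 0 := by
  intro t x y hxy
  have hopen : IsOpen {s : ℝ | R ^ 2 < s ^ 2 + y ^ 2} :=
    isOpen_lt continuous_const (by fun_prop)
  have hev : (fun s => u t s y) =ᶠ[nhds x] fun _ => (0 : ℝ) := by
    filter_upwards [hopen.mem_nhds hxy] with s hs
    exact h t s y hs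
  show deriv (fun s => u t s y) x = 0
  rw [hev.deriv_eq]; simp

lemma vanish_dy {u : ℝ → ℝ → ℝ → ℝ} {R : ℝ}
    (h : ∀ t x y, x ^ 2 + y ^ 2 > R ^ 2 → u t x y = 0) :
    ∀ t x y, x ^ 2 + y ^ 2 > R ^ 2 → Dy u t x y = 0 := by
  intro t x y hxy
  have hopen : IsOpen {s : ℝ | R ^ 2 < x ^ 2 + s ^ 2} :=
    isOpen_lt continuous_const (by fun_prop)
  have hev : (fun s => u t x s) =ᶠ[nhds y] fun _ => (0 : ℝ) := by
    filter_upwards [hopen.mem_nhds hxy] with s hs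
    exact h t x s hs
  show deriv (fun s => u t x s) y = 0
  rw [hev.deriv_eq]; simp

end KPaux

open KPaux Set

/-- Mass integral constraint for the KP equation: any smooth solution of
`u_{tx} + (u u_x + u_{xxx})_x + σ u_{yy} = 0` with uniformly compact support
in `(x,y)` has vanishing total mass `∫_{ℝ²} u dx dy = 0` at every time. -/
theorem kp_mass_constraint (σ : ℝ) (hσ : σ ^ 2 = 1)
    (u : ℝ → ℝ → ℝ → ℝ) (hu : Smooth3 u)
    (heq : ∀ t x y, Dx (Dt u) t x y
      + Dx (fun t x y => u t x y * Dx u t x y + Dx (Dx (Dx u)) t x y) t x y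
      + σ * Dy (Dy u) t x y = 0)
    (hsupp : ∃ R > 0, ∀ t x y : ℝ, x ^ 2 + y ^ 2 ≥ R ^ 2 → u t x y = 0) :
    ∀ t : ℝ, ∫ p : ℝ × ℝ, u t p.1 p.2 = 0 := by
  obtain ⟨R, hR, hs⟩ := hsupp
  intro t
  -- strict vanishing predicate
  have hv : ∀ t x y, x ^ 2 + y ^ 2 > R ^ 2 → u t x y = 0 :=
    fun t x y h => hs t x y (le_of_lt h)
  set L : ℝ := R + 1 with hL
  have hRL : R < L := by simp [hL]
  have hR2L2 : R ^ 2 < L ^ 2 := by nlinarith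
  -- the nonlinear flux
  set h23 : ℝ → ℝ → ℝ → ℝ :=
    fun t x y => u t x y * Dx u t x y + Dx (Dx (Dx u)) t x y with h23_def
  have hu23 : Smooth3 h23 := by
    have : Smooth3 fun t x y => u t x y * Dx u t x y := ContDiff.mul hu hu.dx_s11
    exact ContDiff.add this hu.dx_s11.dx_s11.dx_s11
  set h : ℝ → ℝ → ℝ → ℝ := fun t x y => Dt u t x y + h23 t x y with h_def
  have huh : Smooth3 h := ContDiff.add hu.dt_s11 hu23
  -- vanishing of relevant functions on the exterior region
  have hv23 : ∀ t x y, x ^ 2 + y ^ 2 > R ^ 2 → h23 t x y = 0 := by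
    intro t x y hxy
    simp [h23_def, hv t x y hxy, vanish_dx (vanish_dx (vanish_dx hv)) t x y hxy]
  have hvh : ∀ t x y, x ^ 2 + y ^ 2 > R ^ 2 → h t x y = 0 := by
    intro t x y hxy
    simp [h_def, vanish_dt hv t x y hxy, hv23 t x y hxy]
  have hvy : ∀ t x y, x ^ 2 + y ^ 2 > R ^ 2 → Dy u t x y = 0 := vanish_dy hv
  have hvyy : ∀ t x y, x ^ 2 + y ^ 2 > R ^ 2 → Dy (Dy u) t x y = 0 :=
    vanish_dy (vanish_dy hv)
  -- PDE in divergence form: Dy (Dy u) = -σ * Dx h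
  have hdiv : ∀ x y : ℝ, Dy (Dy u) t x y = -σ * Dx h t x y := by
    intro x y
    have hxh : Dx h t x y = Dx (Dt u) t x y + Dx h23 t x y := by
      show deriv (fun s => Dt u t s y + h23 t s y) x = _
      rw [deriv_fun_add ((slice_x hu.dt_s11 t y).differentiable (by simp) x)
        ((slice_x hu23 t y).differentiable (by simp) x)]
      rfl
    have := heq t x y
    have hσ0 : σ ≠ 0 := by intro h0; rw [h0] at hσ; norm_num at hσ
    have hkey : σ * Dy (Dy u) t x y = -(Dx h t x y) := by rw [hxh]; linarith [heq t x y]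
    calc Dy (Dy u) t x y = σ ^ 2 * Dy (Dy u) t x y := by rw [hσ]; ring
      _ = σ * (σ * Dy (Dy u) t x y) := by ring
      _ = σ * (-(Dx h t x y)) := by rw [hkey]
      _ = -σ * Dx h t x y := by ring
  -- FTC: for every y, the integral over x of Dy (Dy u) vanishes
  have hFTC : ∀ y : ℝ, ∫ x : ℝ, Dy (Dy u) t x y = 0 := by
    intro y
    have hsub : Function.support (fun x => Dy (Dy u) t x y) ⊆ Ioc (-L) L := by
      intro x hx
      simp only [Function.mem_support] at hx
      by_contra hmem
      simp only [mem_Ioc, not_and_or, not_lt, not_le] at hmem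
      have : x ^ 2 + y ^ 2 > R ^ 2 := by
        rcases hmem with h1 | h1 <;> nlinarith [sq_nonneg y]
      exact hx (hvyy t x y this)
    rw [← intervalIntegral.integral_eq_integral_of_support_subset hsub]
    have hcongr : ∀ x : ℝ, Dy (Dy u) t x y = -σ * deriv (fun s => h t s y) x := by
      intro x; exact hdiv x y
    calc ∫ x in (-L)..L, Dy (Dy u) t x y
        = ∫ x in (-L)..L, -σ * deriv (fun s => h t s y) x := by
          apply intervalIntegral.integral_congr; intro x _; exact hcongr x
      _ = -σ * ∫ x in (-L)..L, deriv (fun s => h t s y) x := by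
          rw [intervalIntegral.integral_const_mul]
      _ = -σ * (h t L y - h t (-L) y) := by
          rw [intervalIntegral.integral_deriv_eq_sub]
          · intro x _
            exact ((slice_x huh t y).differentiable (by simp) x)
          · exact ((slice_x huh.dx_s11 t y).continuous.intervalIntegrable _ _)
      _ = 0 := by
          rw [hvh t L y (by nlinarith [sq_nonneg y]), hvh t (-L) y (by nlinarith [sq_nonneg y])]
          ring
  -- Integration by parts in y: ∫ y, u t x y = ∫ y, (y^2/2) * Dy (Dy u) t x y
  have hIBP : ∀ x : ℝ, (∫ y : ℝ, u t x y) = ∫ y : ℝ, y ^ 2 / 2 * Dy (Dy u) t x y := by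
    intro x
    have hsupp1 : Function.support (fun y => u t x y) ⊆ Ioc (-L) L := by
      intro y hy
      simp only [Function.mem_support] at hy
      by_contra hmem
      simp only [mem_Ioc, not_and_or, not_lt, not_le] at hmem
      have : x ^ 2 + y ^ 2 > R ^ 2 := by
        rcases hmem with h1 | h1 <;> nlinarith [sq_nonneg x]
      exact hy (hv t x y this)
    have hsupp2 : Function.support (fun y => y ^ 2 / 2 * Dy (Dy u) t x y) ⊆ Ioc (-L) L := by
      intro y hy
      simp only [Function.mem_support] at hy
      by_contra hmem
      simp only [mem_Ioc, not_and_or, not_lt, not_le] at hmem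
      have : x ^ 2 + y ^ 2 > R ^ 2 := by
        rcases hmem with h1 | h1 <;> nlinarith [sq_nonneg x]
      rw [hvyy t x y this, mul_zero] at hy
      exact hy rfl
    rw [← intervalIntegral.integral_eq_integral_of_support_subset hsupp1,
        ← intervalIntegral.integral_eq_integral_of_support_subset hsupp2]
    have hbL : x ^ 2 + L ^ 2 > R ^ 2 := by nlinarith [sq_nonneg x]
    have hbL' : x ^ 2 + (-L) ^ 2 > R ^ 2 := by nlinarith [sq_nonneg x]
    -- first integration by parts: weight y^2/2 against (Dy u)'
    have ibp1 : ∫ y in (-L)..L, y ^ 2 / 2 * Dy (Dy u) t x y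
        = L ^ 2 / 2 * Dy u t x L - (-L) ^ 2 / 2 * Dy u t x (-L)
          - ∫ y in (-L)..L, y * Dy u t x y := by
      apply intervalIntegral.integral_mul_deriv_eq_deriv_mul
        (u := fun y => y ^ 2 / 2) (u' := fun y => y)
        (v := fun y => Dy u t x y) (v' := fun y => Dy (Dy u) t x y)
      · intro y _
        have : HasDerivAt (fun y : ℝ => y ^ 2 / 2) (y) y := by
          have := (hasDerivAt_pow 2 y).div_const 2
          simpa using this
        exact this
      · intro y _
        exact ((slice_y hu.dy_s11 t x).differentiable (by simp) y).hasDerivAt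
      · exact (continuous_id.intervalIntegrable _ _)
      · exact ((slice_y hu.dy_s11.dy_s11 t x).continuous.intervalIntegrable _ _)
    have ibp2 : ∫ y in (-L)..L, y * Dy u t x y
        = L * u t x L - (-L) * u t x (-L) - ∫ y in (-L)..L, 1 * u t x y := by
      apply intervalIntegral.integral_mul_deriv_eq_deriv_mul
        (u := fun y => y) (u' := fun _ => (1 : ℝ))
        (v := fun y => u t x y) (v' := fun y => Dy u t x y)
      · intro y _; exact hasDerivAt_id y
      · intro y _
        exact ((slice_y hu t x).differentiable (by simp) y).hasDerivAt
      · exact (continuous_const.intervalIntegrable _ _)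
      · exact ((slice_y hu.dy_s11 t x).continuous.intervalIntegrable _ _)
    rw [ibp1, ibp2, hvy t x L hbL, hvy t x (-L) hbL', hv t x L hbL, hv t x (-L) hbL']
    simp [one_mul]
  -- compact support + continuity facts on the plane
  have hKcomp : IsCompact (Icc (-L) L ×ˢ Icc (-L) L : Set (ℝ × ℝ)) :=
    isCompact_Icc.prod isCompact_Icc
  have hcs : ∀ (g : ℝ → ℝ → ℝ), (∀ x y, x ^ 2 + y ^ 2 > R ^ 2 → g x y = 0) →
      HasCompactSupport fun p : ℝ × ℝ => g p.1 p.2 := by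
    intro g hg
    apply HasCompactSupport.intro hKcomp
    intro p hp
    simp only [mem_prod, mem_Icc, not_and_or] at hp
    apply hg
    rcases hp with h1 | h1 <;>
    · simp only [not_and_or, not_le] at h1
      rcases h1 with h2 | h2 <;> nlinarith [sq_nonneg p.1, sq_nonneg p.2]
  have hint_u : Integrable (fun p : ℝ × ℝ => u t p.1 p.2) :=
    (slice_xy hu t).integrable_of_hasCompactSupport (hcs _ (fun x y h => hv t x y h))
  have hint_w : Integrable (fun p : ℝ × ℝ => p.2 ^ 2 / 2 * Dy (Dy u) t p.1 p.2) := by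
    have hc : Continuous fun p : ℝ × ℝ => p.2 ^ 2 / 2 * Dy (Dy u) t p.1 p.2 := by
      exact (by fun_prop : Continuous fun p : ℝ × ℝ => p.2 ^ 2 / 2).mul (slice_xy hu.dy_s11.dy_s11 t)
    apply hc.integrable_of_hasCompactSupport
    apply hcs (fun x y => y ^ 2 / 2 * Dy (Dy u) t x y)
    intro x y hxy
    rw [hvyy t x y hxy, mul_zero]
  -- put everything together
  rw [show (volume : Measure (ℝ × ℝ)) = (volume : Measure ℝ).prod volume from
    (MeasureTheory.Measure.volume_eq_prod ℝ ℝ)] at hint_u ⊢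
  rw [MeasureTheory.integral_prod _ hint_u]
  calc (∫ x : ℝ, ∫ y : ℝ, u t x y)
      = ∫ x : ℝ, ∫ y : ℝ, y ^ 2 / 2 * Dy (Dy u) t x y := by
        apply integral_congr_ae
        filter_upwards with x
        exact hIBP x
    _ = ∫ y : ℝ, ∫ x : ℝ, y ^ 2 / 2 * Dy (Dy u) t x y := by
        apply MeasureTheory.integral_integral_swap
        rw [← MeasureTheory.Measure.volume_eq_prod]
        exact hint_w
    _ = ∫ y : ℝ, y ^ 2 / 2 * ∫ x : ℝ, Dy (Dy u) t x y := by
        apply integral_congr_ae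
        filter_upwards with y
        exact MeasureTheory.integral_const_mul _ _
    _ = 0 := by
        apply integral_eq_zero_of_ae
        filter_upwards with y
        simp [hFTC y]
end

section
/- Let σ ∈ ℝ with σ² = 1 and let u : ℝ³ → ℝ be infinitely differentiable in (t, x, y), satisfying the KP equation ∂_x∂_t u + ∂_x( u ∂_x u + ∂_x³ u ) + σ ∂_y² u = 0 everywhere on ℝ³. Suppose there exists R > 0 such that u(t,x,y) = 0 whenever x² + y² ≥ R². Then for every t ∈ ℝ: ∫_{ℝ²} y · u(t,x,y) dx dy = 0. -/
open MeasureTheory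

namespace KP
noncomputable def U3 (u : ℝ → ℝ → ℝ → ℝ) : ℝ × ℝ × ℝ → ℝ := fun p => u p.1 p.2.1 p.2.2

variable {u : ℝ → ℝ → ℝ → ℝ}

lemma slice_t (hu : Smooth3 u) (t x y : ℝ) :
    HasDerivAt (fun s => u s x y) (fderiv ℝ (U3 u) (t,x,y) (1,0,0)) t := by
  have hL : HasDerivAt (fun s : ℝ => ((s, x, y) : ℝ × ℝ × ℝ)) ((1:ℝ),(0:ℝ),(0:ℝ)) t :=
    (hasDerivAt_id t).prodMk ((hasDerivAt_const t x).prodMk (hasDerivAt_const t y))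
  exact ((hu.differentiable (by simp) (t,x,y)).hasFDerivAt.comp_hasDerivAt t hL)

lemma slice_x (hu : Smooth3 u) (t x y : ℝ) :
    HasDerivAt (fun s => u t s y) (fderiv ℝ (U3 u) (t,x,y) (0,1,0)) x := by
  have hL : HasDerivAt (fun s : ℝ => ((t, s, y) : ℝ × ℝ × ℝ)) ((0:ℝ),(1:ℝ),(0:ℝ)) x :=
    (hasDerivAt_const x t).prodMk ((hasDerivAt_id x).prodMk (hasDerivAt_const x y))
  exact ((hu.differentiable (by simp) (t,x,y)).hasFDerivAt.comp_hasDerivAt x hL)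

lemma slice_y (hu : Smooth3 u) (t x y : ℝ) :
    HasDerivAt (fun s => u t x s) (fderiv ℝ (U3 u) (t,x,y) (0,0,1)) y := by
  have hL : HasDerivAt (fun s : ℝ => ((t, x, s) : ℝ × ℝ × ℝ)) ((0:ℝ),(0:ℝ),(1:ℝ)) y :=
    (hasDerivAt_const y t).prodMk ((hasDerivAt_const y x).prodMk (hasDerivAt_id y))
  exact ((hu.differentiable (by simp) (t,x,y)).hasFDerivAt.comp_hasDerivAt y hL)

lemma Dt_eq (hu : Smooth3 u) (t x y : ℝ) :
    Dt u t x y = fderiv ℝ (U3 u) (t,x,y) (1,0,0) := (slice_t hu t x y).deriv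
lemma Dx_eq (hu : Smooth3 u) (t x y : ℝ) :
    Dx u t x y = fderiv ℝ (U3 u) (t,x,y) (0,1,0) := (slice_x hu t x y).deriv
lemma Dy_eq (hu : Smooth3 u) (t x y : ℝ) :
    Dy u t x y = fderiv ℝ (U3 u) (t,x,y) (0,0,1) := (slice_y hu t x y).deriv

lemma smooth_fderiv_apply (hu : Smooth3 u) (v : ℝ × ℝ × ℝ) :
    ContDiff ℝ (⊤ : ℕ∞) (fun p : ℝ × ℝ × ℝ => fderiv ℝ (U3 u) p v) :=
  (ContinuousLinearMap.apply ℝ ℝ v).contDiff.comp (hu.fderiv_right (by exact_mod_cast le_top))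

lemma smooth_Dt (hu : Smooth3 u) : Smooth3 (Dt u) := by
  have h : (fun p : ℝ × ℝ × ℝ => Dt u p.1 p.2.1 p.2.2)
      = fun p => fderiv ℝ (U3 u) p (1,0,0) := funext fun p => Dt_eq hu p.1 p.2.1 p.2.2
  rw [Smooth3, h]; exact smooth_fderiv_apply hu _
lemma smooth_Dx (hu : Smooth3 u) : Smooth3 (Dx u) := by
  have h : (fun p : ℝ × ℝ × ℝ => Dx u p.1 p.2.1 p.2.2)
      = fun p => fderiv ℝ (U3 u) p (0,1,0) := funext fun p => Dx_eq hu p.1 p.2.1 p.2.2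
  rw [Smooth3, h]; exact smooth_fderiv_apply hu _
lemma smooth_Dy (hu : Smooth3 u) : Smooth3 (Dy u) := by
  have h : (fun p : ℝ × ℝ × ℝ => Dy u p.1 p.2.1 p.2.2)
      = fun p => fderiv ℝ (U3 u) p (0,0,1) := funext fun p => Dy_eq hu p.1 p.2.1 p.2.2
  rw [Smooth3, h]; exact smooth_fderiv_apply hu _


/-- Vanishing on the open exterior region is inherited by partial derivatives. -/
lemma supp_Dt {R : ℝ} (h : ∀ t x y, R ^ 2 < x ^ 2 + y ^ 2 → u t x y = 0) :
    ∀ t x y, R ^ 2 < x ^ 2 + y ^ 2 → Dt u t x y = 0 := by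
  intro t x y hxy
  have hz : (fun s => u s x y) = fun _ => (0:ℝ) := funext fun s => h s x y hxy
  rw [Dt]; rw [hz]; simp

lemma supp_Dx {R : ℝ} (h : ∀ t x y, R ^ 2 < x ^ 2 + y ^ 2 → u t x y = 0) :
    ∀ t x y, R ^ 2 < x ^ 2 + y ^ 2 → Dx u t x y = 0 := by
  intro t x y hxy
  have hopen : IsOpen {s : ℝ | R ^ 2 < s ^ 2 + y ^ 2} :=
    isOpen_lt continuous_const (by fun_prop)
  have hev : (fun s => u t s y) =ᶠ[nhds x] fun _ => (0:ℝ) :=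
    Filter.eventually_of_mem (hopen.mem_nhds hxy) fun s hs => h t s y hs
  rw [Dx]; rw [hev.deriv_eq]; simp

lemma supp_Dy {R : ℝ} (h : ∀ t x y, R ^ 2 < x ^ 2 + y ^ 2 → u t x y = 0) :
    ∀ t x y, R ^ 2 < x ^ 2 + y ^ 2 → Dy u t x y = 0 := by
  intro t x y hxy
  have hopen : IsOpen {s : ℝ | R ^ 2 < x ^ 2 + s ^ 2} :=
    isOpen_lt continuous_const (by fun_prop)
  have hev : (fun s => u t x s) =ᶠ[nhds y] fun _ => (0:ℝ) :=
    Filter.eventually_of_mem (hopen.mem_nhds hxy) fun s hs => h t x s hs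
  rw [Dy]; rw [hev.deriv_eq]; simp

lemma cont_slice_x (hu : Smooth3 u) (t y : ℝ) : Continuous (fun x => u t x y) := by
  have : Continuous (fun x : ℝ => ((t, x, y) : ℝ × ℝ × ℝ)) := by fun_prop
  exact hu.continuous.comp this

/-- Integrability of slices with compact support. -/
lemma int_slice (hu : Smooth3 u) {R : ℝ} (hR : 0 < R)
    (h : ∀ t x y, R ^ 2 < x ^ 2 + y ^ 2 → u t x y = 0) (t y : ℝ) :
    MeasureTheory.Integrable (fun x => u t x y) := by
  apply (cont_slice_x hu t y).integrable_of_hasCompactSupport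
  apply HasCompactSupport.intro (isCompact_Icc (a := -R) (b := R))
  intro x hx
  simp only [Set.mem_Icc, not_and_or, not_le] at hx
  apply h; rcases hx with hx | hx <;> nlinarith [sq_nonneg y, hR]

/-- Differentiation in `y` under the integral over `x`. -/
lemma key_hasDerivAt (hu : Smooth3 u) {R : ℝ} (hR : 0 < R)
    (h : ∀ t x y, R ^ 2 < x ^ 2 + y ^ 2 → u t x y = 0) (t y : ℝ) :
    HasDerivAt (fun z => ∫ x, u t x z) (∫ x, Dy u t x y) y := by
  have hDy := smooth_Dy hu
  have hDysupp := supp_Dy (u := u) h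
  -- bound for the derivative on the compact parameter box
  obtain ⟨C, hC⟩ : ∃ C, ∀ p ∈ (Set.Icc (-R) R ×ˢ Set.Icc (y - 1) (y + 1)),
      ‖Dy u t p.1 p.2‖ ≤ C := by
    apply (isCompact_Icc.prod isCompact_Icc).exists_bound_of_continuousOn
    have : Continuous fun p : ℝ × ℝ => Dy u t p.1 p.2 := by
      have hc : Continuous (fun p : ℝ × ℝ => ((t, p.1, p.2) : ℝ × ℝ × ℝ)) := by fun_prop
      exact hDy.continuous.comp hc
    exact this.continuousOn
  have hbound_int : MeasureTheory.Integrable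
      ((Set.Icc (-R) R).indicator fun _ => C) := by
    apply MeasureTheory.IntegrableOn.integrable_indicator _ measurableSet_Icc
    exact MeasureTheory.integrableOn_const (by simp)
  have key := hasDerivAt_integral_of_dominated_loc_of_deriv_le
    (F := fun z x => u t x z) (F' := fun z x => Dy u t x z)
    (x₀ := y) (bound := (Set.Icc (-R) R).indicator fun _ => C)
    (Metric.ball_mem_nhds y one_pos)
    (Filter.Eventually.of_forall fun z => (cont_slice_x hu t z).aestronglyMeasurable)
    (int_slice hu hR h t y)
    (by
      have hc : Continuous (fun x => Dy u t x y) := by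
        have : Continuous (fun x : ℝ => ((t, x, y) : ℝ × ℝ × ℝ)) := by fun_prop
        exact hDy.continuous.comp this
      exact hc.aestronglyMeasurable)
    (Filter.Eventually.of_forall fun x => ?_)
    hbound_int
    (Filter.Eventually.of_forall fun x => ?_)
  · exact key.2
  · -- bound
    intro z hz
    by_cases hxR : x ∈ Set.Icc (-R) R
    · rw [Set.indicator_of_mem hxR]
      apply hC (x, z)
      refine Set.mem_prod.2 ⟨hxR, ?_⟩
      have := Metric.mem_ball.1 hz
      rw [Real.dist_eq] at this
      constructor <;> [linarith [abs_le.1 this.le]; linarith [(abs_le.1 this.le).2]]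
    · rw [Set.indicator_of_notMem hxR]
      have : Dy u t x z = 0 := by
        apply hDysupp
        simp only [Set.mem_Icc, not_and_or, not_le] at hxR
        rcases hxR with hx | hx <;> nlinarith [sq_nonneg z, hR]
      simp [this]
  · -- differentiability
    intro z hz
    have := slice_y hu t x z
    rwa [← Dy_eq hu t x z] at this


/-- The integral over `x` of an `x`-derivative of a compactly supported smooth
function vanishes. -/
lemma int_Dx_zero (hu : Smooth3 u) {R : ℝ} (hR : 0 < R)
    (h : ∀ t x y, R ^ 2 < x ^ 2 + y ^ 2 → u t x y = 0) (t y : ℝ) :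
    (∫ x, Dx u t x y) = 0 := by
  have hDxsupp := supp_Dx (u := u) h
  have hsub : Function.support (fun x => Dx u t x y) ⊆ Set.Ioc (-(R+1)) (R+1) := by
    intro x hx
    by_contra hmem
    apply hx
    simp only [Set.mem_Ioc, not_and_or, not_lt, not_le] at hmem
    apply hDxsupp
    rcases hmem with hm | hm <;> nlinarith [sq_nonneg y, hR]
  have heqI : (∫ x in (-(R+1))..(R+1), Dx u t x y) = ∫ x, Dx u t x y :=
    intervalIntegral.integral_eq_integral_of_support_subset hsub
  rw [← heqI]
  have hfund : (∫ x in (-(R+1))..(R+1), deriv (fun s => u t s y) x)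
      = u t (R+1) y - u t (-(R+1)) y := by
    apply intervalIntegral.integral_deriv_eq_sub
    · intro x _
      exact (slice_x hu t x y).differentiableAt
    · apply Continuous.intervalIntegrable
      have hc : Continuous (fun x : ℝ => ((t, x, y) : ℝ × ℝ × ℝ)) := by fun_prop
      have : Continuous (fun x => Dx u t x y) := (smooth_Dx hu).continuous.comp hc
      have hder : deriv (fun s => u t s y) = fun x => Dx u t x y := rfl
      rw [hder]; exact this
  have h1 : u t (R+1) y = 0 := h t (R+1) y (by nlinarith [sq_nonneg y])
  have h2 : u t (-(R+1)) y = 0 := h t (-(R+1)) y (by nlinarith [sq_nonneg y])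
  have : (∫ x in (-(R+1))..(R+1), Dx u t x y)
      = ∫ x in (-(R+1))..(R+1), deriv (fun s => u t s y) x := rfl
  rw [this, hfund, h1, h2, sub_zero]

end KP

open KP

/-- `y`-moment integral constraint for the KP equation: any smooth solution of
`u_{tx} + (u u_x + u_{xxx})_x + σ u_{yy} = 0` with uniformly compact support
in `(x,y)` satisfies `∫_{ℝ²} y u dx dy = 0` at every time. -/
theorem kp_ymoment_constraint (σ : ℝ) (hσ : σ ^ 2 = 1)
    (u : ℝ → ℝ → ℝ → ℝ) (hu : Smooth3 u)
    (heq : ∀ t x y, Dx (Dt u) t x y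
      + Dx (fun t x y => u t x y * Dx u t x y + Dx (Dx (Dx u)) t x y) t x y
      + σ * Dy (Dy u) t x y = 0)
    (hsupp : ∃ R > 0, ∀ t x y : ℝ, x ^ 2 + y ^ 2 ≥ R ^ 2 → u t x y = 0) :
    ∀ t : ℝ, ∫ p : ℝ × ℝ, p.2 * u t p.1 p.2 = 0 := by
  obtain ⟨R, hR, hsupp⟩ := hsupp
  have hext : ∀ t x y, R ^ 2 < x ^ 2 + y ^ 2 → u t x y = 0 :=
    fun t' x y hlt => hsupp t' x y (le_of_lt hlt)
  intro t
  set H : ℝ → ℝ → ℝ → ℝ :=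
    fun t x y => u t x y * Dx u t x y + Dx (Dx (Dx u)) t x y with hH
  have sH : Smooth3 H := by
    show ContDiff ℝ (⊤ : ℕ∞) fun p : ℝ × ℝ × ℝ => H p.1 p.2.1 p.2.2
    exact ContDiff.add (ContDiff.mul hu (smooth_Dx hu))
      (smooth_Dx (smooth_Dx (smooth_Dx hu)))
  have sDt := smooth_Dt hu
  have hsuppH : ∀ t x y, R ^ 2 < x ^ 2 + y ^ 2 → H t x y = 0 := by
    intro t' x y hlt
    have h1 := hext t' x y hlt
    have h2 := supp_Dx (supp_Dx (supp_Dx hext)) t' x y hlt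
    simp [hH, h1, h2]
  set G : ℝ → ℝ → ℝ → ℝ := fun t x y => Dt u t x y + H t x y with hG
  have sG : Smooth3 G := by
    show ContDiff ℝ (⊤ : ℕ∞) fun p : ℝ × ℝ × ℝ => G p.1 p.2.1 p.2.2
    exact ContDiff.add sDt sH
  have hsuppG : ∀ t x y, R ^ 2 < x ^ 2 + y ^ 2 → G t x y = 0 := by
    intro t' x y hlt
    simp [hG, supp_Dt hext t' x y hlt, hsuppH t' x y hlt]
  have hDxG : ∀ t' x z, Dx G t' x z = Dx (Dt u) t' x z + Dx H t' x z := by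
    intro t' x z
    have h1 := (slice_x sDt t' x z).differentiableAt
    have h2 := (slice_x sH t' x z).differentiableAt
    exact deriv_add h1 h2
  have hint_DyDy : ∀ z, (∫ x, Dy (Dy u) t x z) = 0 := by
    intro z
    have hptw : ∀ x, Dy (Dy u) t x z = -σ * Dx G t x z := by
      intro x
      have he := heq t x z
      have hg := hDxG t x z
      linear_combination σ * he + σ * hg - Dy (Dy u) t x z * hσ
    calc (∫ x, Dy (Dy u) t x z) = ∫ x, -σ * Dx G t x z := by simp_rw [hptw]
      _ = -σ * ∫ x, Dx G t x z := integral_const_mul _ _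
      _ = 0 := by rw [int_Dx_zero sG hR hsuppG t z, mul_zero]
  have hF1 : ∀ z, HasDerivAt (fun z' => ∫ x, Dy u t x z') 0 z := by
    intro z
    have hk := key_hasDerivAt (smooth_Dy hu) hR (supp_Dy hext) t z
    rwa [hint_DyDy z] at hk
  have hF1const := is_const_of_deriv_eq_zero
    (fun z => (hF1 z).differentiableAt) (fun z => (hF1 z).deriv)
  have hF1zero : ∀ z, (∫ x, Dy u t x z) = 0 := by
    intro z
    have h0 : (∫ x, Dy u t x (R+1)) = 0 := by
      have hz : (fun x => Dy u t x (R+1)) = fun _ => (0:ℝ) :=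
        funext fun x => supp_Dy hext t x (R+1) (by nlinarith [sq_nonneg x])
      rw [hz]; exact integral_zero _ _
    exact (hF1const z (R+1)).trans h0
  have hF : ∀ z, HasDerivAt (fun z' => ∫ x, u t x z') 0 z := by
    intro z
    have hk := key_hasDerivAt hu hR hext t z
    rwa [hF1zero z] at hk
  have hFconst := is_const_of_deriv_eq_zero
    (fun z => (hF z).differentiableAt) (fun z => (hF z).deriv)
  have hFzero : ∀ z, (∫ x, u t x z) = 0 := by
    intro z
    have h0 : (∫ x, u t x (R+1)) = 0 := by
      have hz : (fun x => u t x (R+1)) = fun _ => (0:ℝ) :=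
        funext fun x => hext t x (R+1) (by nlinarith [sq_nonneg x])
      rw [hz]; exact integral_zero _ _
    exact (hFconst z (R+1)).trans h0
  -- Fubini
  have hcont : Continuous (fun p : ℝ × ℝ => p.2 * u t p.1 p.2) := by
    have hc : Continuous (fun p : ℝ × ℝ => ((t, p.1, p.2) : ℝ × ℝ × ℝ)) := by fun_prop
    exact continuous_snd.mul (hu.continuous.comp hc)
  have hcs : HasCompactSupport (fun p : ℝ × ℝ => p.2 * u t p.1 p.2) := by
    apply HasCompactSupport.intro ((isCompact_Icc (a := -R) (b := R)).prod (isCompact_Icc (a := -R) (b := R)))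
    intro p hp
    have : u t p.1 p.2 = 0 := by
      apply hext
      simp only [Set.mem_prod, Set.mem_Icc, not_and_or, not_le] at hp
      rcases hp with (h | h) | (h | h) <;> nlinarith [sq_nonneg p.1, sq_nonneg p.2, hR]
    rw [this, mul_zero]
  have hint : Integrable (fun p : ℝ × ℝ => p.2 * u t p.1 p.2) :=
    hcont.integrable_of_hasCompactSupport hcs
  rw [MeasureTheory.Measure.volume_eq_prod] at hint ⊢
  rw [MeasureTheory.integral_prod _ hint]
  rw [MeasureTheory.integral_integral_swap (f := fun x y => y * u t x y) hint]
  have hy : ∀ y : ℝ, (∫ x, y * u t x y) = 0 := by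
    intro y
    rw [MeasureTheory.integral_const_mul, hFzero y, mul_zero]
  simp only [hy, integral_zero]
end

section
/- Let α, β, σ ∈ ℝ with α ≠ β, and let u : ℝ³ → ℝ be infinitely differentiable in (t, x, y). Define G = ∂_x∂_t u − (∂_x u)² ∂_x² u + α (∂_y u)(∂_x² u) + β (∂_x u)(∂_x∂_y u) + ∂_x⁴ u + σ ∂_y² u, and define X = −y ( ∂_t u − (1/3)(∂_x u)³ + α (∂_y u)(∂_x u) + ∂_x³ u ) and Y = σ u − y ( σ ∂_y u − (1/2)(α − β)(∂_x u)² ). Then for every (t,x,y) ∈ ℝ³: (∂_x u)² = (2/(α − β)) ( ∂_x X + ∂_y Y + y G ). -/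
namespace UmKPAux

lemma one_le_coe_top : (1 : WithTop ℕ∞) ≤ ((⊤ : ℕ∞) : WithTop ℕ∞) := by
  exact_mod_cast (le_top : (1 : ℕ∞) ≤ ⊤)

lemma coe_top_ne_zero : ((⊤ : ℕ∞) : WithTop ℕ∞) ≠ 0 := by
  exact_mod_cast (ENat.top_ne_zero : (⊤ : ℕ∞) ≠ 0)

lemma top_add_one_le : ((⊤ : ℕ∞) : WithTop ℕ∞) + 1 ≤ ((⊤ : ℕ∞) : WithTop ℕ∞) := by
  exact_mod_cast (le_top : ((⊤ : ℕ∞) + 1 : ℕ∞) ≤ ⊤)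

lemma sliceT {F : ℝ × ℝ × ℝ → ℝ} (hF : ContDiff ℝ (⊤ : ℕ∞) F) (t x y : ℝ) :
    HasDerivAt (fun s => F (s, x, y)) (fderiv ℝ F (t, x, y) (1, 0, 0)) t :=
  ((hF.differentiable coe_top_ne_zero (t, x, y)).hasFDerivAt).comp_hasDerivAt t
    ((hasDerivAt_id t).prodMk ((hasDerivAt_const t x).prodMk (hasDerivAt_const t y)))

lemma sliceX {F : ℝ × ℝ × ℝ → ℝ} (hF : ContDiff ℝ (⊤ : ℕ∞) F) (t x y : ℝ) :
    HasDerivAt (fun s => F (t, s, y)) (fderiv ℝ F (t, x, y) (0, 1, 0)) x :=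
  ((hF.differentiable coe_top_ne_zero (t, x, y)).hasFDerivAt).comp_hasDerivAt x
    ((hasDerivAt_const x t).prodMk ((hasDerivAt_id x).prodMk (hasDerivAt_const x y)))

lemma sliceY {F : ℝ × ℝ × ℝ → ℝ} (hF : ContDiff ℝ (⊤ : ℕ∞) F) (t x y : ℝ) :
    HasDerivAt (fun s => F (t, x, s)) (fderiv ℝ F (t, x, y) (0, 0, 1)) y :=
  ((hF.differentiable coe_top_ne_zero (t, x, y)).hasFDerivAt).comp_hasDerivAt y
    ((hasDerivAt_const y t).prodMk ((hasDerivAt_const y x).prodMk (hasDerivAt_id y)))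

lemma smooth_pd {F : ℝ × ℝ × ℝ → ℝ} (hF : ContDiff ℝ (⊤ : ℕ∞) F) (v : ℝ × ℝ × ℝ) :
    ContDiff ℝ (⊤ : ℕ∞) (fun p => fderiv ℝ F p v) :=
  (hF.fderiv_right top_add_one_le).clm_apply contDiff_const

lemma smooth3_Dt {u : ℝ → ℝ → ℝ → ℝ} (hu : Smooth3 u) : Smooth3 (Dt u) := by
  have h : (fun p : ℝ × ℝ × ℝ => Dt u p.1 p.2.1 p.2.2)
      = fun p => fderiv ℝ (fun q : ℝ × ℝ × ℝ => u q.1 q.2.1 q.2.2) p (1, 0, 0) := by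
    funext p
    exact (sliceT hu p.1 p.2.1 p.2.2).deriv
  show ContDiff ℝ (⊤ : ℕ∞) _
  rw [h]
  exact smooth_pd hu _

lemma smooth3_Dx {u : ℝ → ℝ → ℝ → ℝ} (hu : Smooth3 u) : Smooth3 (Dx u) := by
  have h : (fun p : ℝ × ℝ × ℝ => Dx u p.1 p.2.1 p.2.2)
      = fun p => fderiv ℝ (fun q : ℝ × ℝ × ℝ => u q.1 q.2.1 q.2.2) p (0, 1, 0) := by
    funext p
    exact (sliceX hu p.1 p.2.1 p.2.2).deriv
  show ContDiff ℝ (⊤ : ℕ∞) _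
  rw [h]
  exact smooth_pd hu _

lemma smooth3_Dy {u : ℝ → ℝ → ℝ → ℝ} (hu : Smooth3 u) : Smooth3 (Dy u) := by
  have h : (fun p : ℝ × ℝ × ℝ => Dy u p.1 p.2.1 p.2.2)
      = fun p => fderiv ℝ (fun q : ℝ × ℝ × ℝ => u q.1 q.2.1 q.2.2) p (0, 0, 1) := by
    funext p
    exact (sliceY hu p.1 p.2.1 p.2.2).deriv
  show ContDiff ℝ (⊤ : ℕ∞) _
  rw [h]
  exact smooth_pd hu _

lemma hasDerivAt_sliceX {u : ℝ → ℝ → ℝ → ℝ} (hu : Smooth3 u) (t x y : ℝ) :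
    HasDerivAt (fun s => u t s y) (Dx u t x y) x := by
  have h := sliceX hu t x y
  exact h.differentiableAt.hasDerivAt

lemma hasDerivAt_sliceY {u : ℝ → ℝ → ℝ → ℝ} (hu : Smooth3 u) (t x y : ℝ) :
    HasDerivAt (fun s => u t x s) (Dy u t x y) y := by
  have h := sliceY hu t x y
  exact h.differentiableAt.hasDerivAt

lemma clairaut {u : ℝ → ℝ → ℝ → ℝ} (hu : Smooth3 u) (t x y : ℝ) :
    Dx (Dy u) t x y = Dy (Dx u) t x y := by
  set F : ℝ × ℝ × ℝ → ℝ := fun q => u q.1 q.2.1 q.2.2 with hFdef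
  have hF : ContDiff ℝ (⊤ : ℕ∞) F := hu
  have hd1 : Differentiable ℝ (fderiv ℝ F) := (hF.fderiv_right top_add_one_le).differentiable coe_top_ne_zero
  have h1 : Dx (Dy u) t x y
      = fderiv ℝ (fun p => fderiv ℝ F p (0, 0, 1)) (t, x, y) (0, 1, 0) := by
    have hfun : (fun s => Dy u t s y) = fun s => fderiv ℝ F (t, s, y) (0, 0, 1) :=
      funext fun s => (sliceY hF t s y).deriv
    show deriv (fun s => Dy u t s y) x = _
    rw [hfun]
    exact (sliceX (smooth_pd hF (0, 0, 1)) t x y).deriv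
  have h2 : Dy (Dx u) t x y
      = fderiv ℝ (fun p => fderiv ℝ F p (0, 1, 0)) (t, x, y) (0, 0, 1) := by
    have hfun : (fun s => Dx u t x s) = fun s => fderiv ℝ F (t, x, s) (0, 1, 0) :=
      funext fun s => (sliceX hF t x s).deriv
    show deriv (fun s => Dx u t x s) y = _
    rw [hfun]
    exact (sliceY (smooth_pd hF (0, 1, 0)) t x y).deriv
  rw [h1, h2]
  rw [fderiv_clm_apply (hd1 (t, x, y)) (differentiableAt_const _),
      fderiv_clm_apply (hd1 (t, x, y)) (differentiableAt_const _)]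
  simp only [fderiv_const, fderiv_fun_const, Pi.zero_apply, ContinuousLinearMap.comp_zero,
    ContinuousLinearMap.zero_apply, zero_add, ContinuousLinearMap.add_apply,
    ContinuousLinearMap.flip_apply]
  exact second_derivative_symmetric (f := F) (fun p => (hF.differentiable coe_top_ne_zero p).hasFDerivAt)
    (hd1 (t, x, y)).hasFDerivAt _ _

end UmKPAux

/-- Divergence identity for the conserved density `u_x²` of the universal
modified KP equation
`G = u_{tx} - u_x² u_{xx} + α u_y u_{xx} + β u_x u_{xy} + u_{xxxx} + σ u_{yy}`:
with `X = -y(u_t - (1/3)u_x³ + α u_y u_x + u_{xxx})` and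
`Y = σ u - y(σ u_y - (1/2)(α-β)u_x²)`, one has
`u_x² = (2/(α-β)) (D_x X + D_y Y + y G)`. -/
theorem umkp_L2_divergence_identity (α β σ : ℝ) (hαβ : α ≠ β)
    (u : ℝ → ℝ → ℝ → ℝ) (hu : Smooth3 u)
    (G X Y : ℝ → ℝ → ℝ → ℝ)
    (hG : ∀ t x y, G t x y = Dx (Dt u) t x y
      - (Dx u t x y) ^ 2 * Dx (Dx u) t x y
      + α * Dy u t x y * Dx (Dx u) t x y
      + β * Dx u t x y * Dx (Dy u) t x y
      + Dx (Dx (Dx (Dx u))) t x y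
      + σ * Dy (Dy u) t x y)
    (hX : ∀ t x y, X t x y = -(y * (Dt u t x y - (1 / 3) * (Dx u t x y) ^ 3
      + α * Dy u t x y * Dx u t x y + Dx (Dx (Dx u)) t x y)))
    (hY : ∀ t x y, Y t x y = σ * u t x y
      - y * (σ * Dy u t x y - (1 / 2) * (α - β) * (Dx u t x y) ^ 2)) :
    ∀ t x y : ℝ,
      (Dx u t x y) ^ 2 =
        (2 / (α - β)) * (Dx X t x y + Dy Y t x y + y * G t x y) := by
  intro t x y
  have hDtu : Smooth3 (Dt u) := UmKPAux.smooth3_Dt hu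
  have hDxu : Smooth3 (Dx u) := UmKPAux.smooth3_Dx hu
  have hDyu : Smooth3 (Dy u) := UmKPAux.smooth3_Dy hu
  have hDxxxu : Smooth3 (Dx (Dx (Dx u))) := UmKPAux.smooth3_Dx (UmKPAux.smooth3_Dx hDxu)
  -- x-slice derivatives
  have hA : HasDerivAt (fun s => Dt u t s y) (Dx (Dt u) t x y) x :=
    UmKPAux.hasDerivAt_sliceX hDtu t x y
  have hB : HasDerivAt (fun s => Dx u t s y) (Dx (Dx u) t x y) x :=
    UmKPAux.hasDerivAt_sliceX hDxu t x y
  have hC : HasDerivAt (fun s => Dy u t s y) (Dx (Dy u) t x y) x :=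
    UmKPAux.hasDerivAt_sliceX hDyu t x y
  have hD : HasDerivAt (fun s => Dx (Dx (Dx u)) t s y) (Dx (Dx (Dx (Dx u))) t x y) x :=
    UmKPAux.hasDerivAt_sliceX hDxxxu t x y
  -- y-slice derivatives
  have hE : HasDerivAt (fun s => u t x s) (Dy u t x y) y :=
    UmKPAux.hasDerivAt_sliceY hu t x y
  have hFy : HasDerivAt (fun s => Dy u t x s) (Dy (Dy u) t x y) y :=
    UmKPAux.hasDerivAt_sliceY hDyu t x y
  have hGy : HasDerivAt (fun s => Dx u t x s) (Dy (Dx u) t x y) y :=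
    UmKPAux.hasDerivAt_sliceY hDxu t x y
  have eqX : Dx X t x y =
      -(y * (Dx (Dt u) t x y
        - 1 / 3 * ((3 : ℕ) * Dx u t x y ^ 2 * Dx (Dx u) t x y)
        + (α * Dx (Dy u) t x y * Dx u t x y + α * Dy u t x y * Dx (Dx u) t x y)
        + Dx (Dx (Dx (Dx u))) t x y)) := by
    have hXfun : (fun s => X t s y) = fun s => -(y * (Dt u t s y
        - 1 / 3 * Dx u t s y ^ 3 + α * Dy u t s y * Dx u t s y
        + Dx (Dx (Dx u)) t s y)) := funext fun s => hX t s y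
    have hXd := ((((hA.sub ((hB.pow 3).const_mul (1 / 3))).add
        ((hC.const_mul α).mul hB)).add hD).const_mul y).neg
    show deriv (fun s => X t s y) x = _
    rw [hXfun]
    exact hXd.deriv
  have eqY : Dy Y t x y =
      σ * Dy u t x y - (1 * (σ * Dy u t x y - 1 / 2 * (α - β) * Dx u t x y ^ 2)
        + y * (σ * Dy (Dy u) t x y
          - 1 / 2 * (α - β) * ((2 : ℕ) * Dx u t x y ^ 1 * Dy (Dx u) t x y))) := by
    have hYfun : (fun s => Y t x s) = fun s => σ * u t x s
        - s * (σ * Dy u t x s - 1 / 2 * (α - β) * Dx u t x s ^ 2) :=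
      funext fun s => hY t x s
    have hYd := (hE.const_mul σ).sub ((hasDerivAt_id y).mul
      ((hFy.const_mul σ).sub ((hGy.pow 2).const_mul (1 / 2 * (α - β)))))
    show deriv (fun s => Y t x s) y = _
    rw [hYfun]
    exact hYd.deriv
  have hcl : Dx (Dy u) t x y = Dy (Dx u) t x y := UmKPAux.clairaut hu t x y
  have hne : α - β ≠ 0 := sub_ne_zero_of_ne hαβ
  rw [eqX, eqY, hG t x y, hcl]
  push_cast
  field_simp
  ring
end

section
/- Let α, β ∈ ℝ with α ≠ 0 and let u : ℝ³ → ℝ be infinitely differentiable in (t, x, y). Define G = ∂_t∂_x∂_y u + α ∂_x( (∂_x∂_y u)(∂_x² u) ) + β ∂_y( (∂_x∂_y u)(∂_y² u) ) + ∂_x⁴∂_y u + ∂_x∂_y⁴ u. Then for every (t,x,y) ∈ ℝ³: (∂_x² u)(∂_x∂_y u) = (1/α) [ ∂_x( x ( α (∂_x² u)(∂_x∂_y u) + ∂_x³∂_y u ) ) + ∂_y( x ( ∂_t∂_x u + β (∂_x∂_y u)(∂_y² u) + ∂_x∂_y³ u ) − ∂_x³ u ) − x G ]. -/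
namespace NVaux

abbrev E3 : Type := ℝ × ℝ × ℝ

noncomputable def UF (u : ℝ → ℝ → ℝ → ℝ) : E3 → ℝ := fun p => u p.1 p.2.1 p.2.2

lemma smooth3_uf {u} (hu : Smooth3 u) : ContDiff ℝ (⊤ : ℕ∞) (UF u) := hu

lemma hasDerivAt_sliceT {u} (hu : Smooth3 u) (t x y : ℝ) :
    HasDerivAt (fun s => u s x y) (fderiv ℝ (UF u) (t, x, y) (1, 0, 0)) t := by
  exact (hu.differentiable (by simp) (t, x, y)).hasFDerivAt.comp_hasDerivAt t
    (HasDerivAt.prodMk (hasDerivAt_id t) (hasDerivAt_const t (x, y)))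

lemma hasDerivAt_sliceX {u} (hu : Smooth3 u) (t x y : ℝ) :
    HasDerivAt (fun s => u t s y) (fderiv ℝ (UF u) (t, x, y) (0, 1, 0)) x := by
  exact (hu.differentiable (by simp) (t, x, y)).hasFDerivAt.comp_hasDerivAt x
    (HasDerivAt.prodMk (hasDerivAt_const x t) (HasDerivAt.prodMk (hasDerivAt_id x) (hasDerivAt_const x y)))

lemma hasDerivAt_sliceY {u} (hu : Smooth3 u) (t x y : ℝ) :
    HasDerivAt (fun s => u t x s) (fderiv ℝ (UF u) (t, x, y) (0, 0, 1)) y := by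
  exact (hu.differentiable (by simp) (t, x, y)).hasFDerivAt.comp_hasDerivAt y
    (HasDerivAt.prodMk (hasDerivAt_const y t) (HasDerivAt.prodMk (hasDerivAt_const y x) (hasDerivAt_id y)))

lemma Dt_eq {u} (hu : Smooth3 u) (t x y : ℝ) :
    Dt u t x y = fderiv ℝ (UF u) (t, x, y) (1, 0, 0) := (hasDerivAt_sliceT hu t x y).deriv
lemma Dx_eq {u} (hu : Smooth3 u) (t x y : ℝ) :
    Dx u t x y = fderiv ℝ (UF u) (t, x, y) (0, 1, 0) := (hasDerivAt_sliceX hu t x y).deriv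
lemma Dy_eq {u} (hu : Smooth3 u) (t x y : ℝ) :
    Dy u t x y = fderiv ℝ (UF u) (t, x, y) (0, 0, 1) := (hasDerivAt_sliceY hu t x y).deriv

lemma contDiff_pd {F : E3 → ℝ} (hF : ContDiff ℝ (⊤ : ℕ∞) F) (v : E3) :
    ContDiff ℝ (⊤ : ℕ∞) (fun p => fderiv ℝ F p v) := by
  exact (hF.fderiv_right (by exact_mod_cast le_top)).clm_apply contDiff_const

lemma smooth3_dt {u} (hu : Smooth3 u) : Smooth3 (Dt u) := by
  have : (fun p : E3 => Dt u p.1 p.2.1 p.2.2) = fun p => fderiv ℝ (UF u) p (1,0,0) := by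
    funext p; exact Dt_eq hu p.1 p.2.1 p.2.2
  show ContDiff ℝ (⊤ : ℕ∞) fun p : E3 => _
  rw [this]; exact contDiff_pd hu _
lemma smooth3_dx {u} (hu : Smooth3 u) : Smooth3 (Dx u) := by
  have : (fun p : E3 => Dx u p.1 p.2.1 p.2.2) = fun p => fderiv ℝ (UF u) p (0,1,0) := by
    funext p; exact Dx_eq hu p.1 p.2.1 p.2.2
  show ContDiff ℝ (⊤ : ℕ∞) fun p : E3 => _
  rw [this]; exact contDiff_pd hu _
lemma smooth3_dy {u} (hu : Smooth3 u) : Smooth3 (Dy u) := by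
  have : (fun p : E3 => Dy u p.1 p.2.1 p.2.2) = fun p => fderiv ℝ (UF u) p (0,0,1) := by
    funext p; exact Dy_eq hu p.1 p.2.1 p.2.2
  show ContDiff ℝ (⊤ : ℕ∞) fun p : E3 => _
  rw [this]; exact contDiff_pd hu _

lemma pd_swap {F : E3 → ℝ} (hF : ContDiff ℝ (⊤ : ℕ∞) F) (v w : E3) (p : E3) :
    fderiv ℝ (fun q => fderiv ℝ F q w) p v = fderiv ℝ (fun q => fderiv ℝ F q v) p w := by
  have hd : ContDiff ℝ (⊤ : ℕ∞) (fderiv ℝ F) := hF.fderiv_right (by exact_mod_cast le_top)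
  have hdp : DifferentiableAt ℝ (fderiv ℝ F) p := hd.differentiable (by simp) p
  have key : ∀ a b : E3, fderiv ℝ (fun q => fderiv ℝ F q a) p b
      = fderiv ℝ (fderiv ℝ F) p b a := by
    intro a b
    rw [fderiv_clm_apply hdp (differentiableAt_const a)]
    simp
  rw [key w v, key v w]
  exact second_derivative_symmetric (fun q => (hF.differentiable (by simp) q).hasFDerivAt)
    hdp.hasFDerivAt v w

end NVaux

namespace NVaux2
open NVaux

lemma Dx_Dy_comm {f} (hf : Smooth3 f) : Dx (Dy f) = Dy (Dx f) := by
  funext t x y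
  rw [Dx_eq (smooth3_dy hf) t x y, Dy_eq (smooth3_dx hf) t x y]
  have h3 : UF (Dy f) = fun q : E3 => fderiv ℝ (UF f) q (0,0,1) :=
    funext fun p => Dy_eq hf p.1 p.2.1 p.2.2
  have h2 : UF (Dx f) = fun q : E3 => fderiv ℝ (UF f) q (0,1,0) :=
    funext fun p => Dx_eq hf p.1 p.2.1 p.2.2
  rw [h3, h2]
  exact pd_swap hf _ _ _

lemma Dt_Dy_comm {f} (hf : Smooth3 f) : Dt (Dy f) = Dy (Dt f) := by
  funext t x y
  rw [Dt_eq (smooth3_dy hf) t x y, Dy_eq (smooth3_dt hf) t x y]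
  have h3 : UF (Dy f) = fun q : E3 => fderiv ℝ (UF f) q (0,0,1) :=
    funext fun p => Dy_eq hf p.1 p.2.1 p.2.2
  have h1 : UF (Dt f) = fun q : E3 => fderiv ℝ (UF f) q (1,0,0) :=
    funext fun p => Dt_eq hf p.1 p.2.1 p.2.2
  rw [h3, h1]
  exact pd_swap hf _ _ _

lemma hasDX {f} (hf : Smooth3 f) (t x y : ℝ) :
    HasDerivAt (fun s => f t s y) (Dx f t x y) x :=
  (hasDerivAt_sliceX hf t x y).differentiableAt.hasDerivAt

lemma hasDY {f} (hf : Smooth3 f) (t x y : ℝ) :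
    HasDerivAt (fun s => f t x s) (Dy f t x y) y :=
  (hasDerivAt_sliceY hf t x y).differentiableAt.hasDerivAt

end NVaux2

open NVaux NVaux2

/-- Divergence identity for the conserved momentum density `u_{xx} u_{xy}` of the
Novikov--Veselov equation in potential form
`G = u_{txy} + α (u_{xy} u_{xx})_x + β (u_{xy} u_{yy})_y + u_{xxxxy} + u_{xyyyy}`:
`u_{xx} u_{xy} = (1/α)[D_x(x(α u_{xx} u_{xy} + u_{xxxy}))
 + D_y(x(u_{tx} + β u_{xy} u_{yy} + u_{xyyy}) - u_{xxx}) - x G]`. -/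
theorem nv_momentum_divergence_identity (α β : ℝ) (hα : α ≠ 0)
    (u : ℝ → ℝ → ℝ → ℝ) (hu : Smooth3 u)
    (G : ℝ → ℝ → ℝ → ℝ)
    (hG : ∀ t x y, G t x y = Dt (Dx (Dy u)) t x y
      + α * Dx (fun t x y => Dx (Dy u) t x y * Dx (Dx u) t x y) t x y
      + β * Dy (fun t x y => Dx (Dy u) t x y * Dy (Dy u) t x y) t x y
      + Dy (Dx (Dx (Dx (Dx u)))) t x y
      + Dy (Dy (Dy (Dy (Dx u)))) t x y) :
    ∀ t x y : ℝ,
      Dx (Dx u) t x y * Dx (Dy u) t x y =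
        (1 / α) * (Dx (fun t x y => x * (α * Dx (Dx u) t x y * Dx (Dy u) t x y
            + Dy (Dx (Dx (Dx u))) t x y)) t x y
          + Dy (fun t x y => x * (Dt (Dx u) t x y
              + β * Dx (Dy u) t x y * Dy (Dy u) t x y
              + Dy (Dy (Dy (Dx u))) t x y)
            - Dx (Dx (Dx u)) t x y) t x y
          - x * G t x y) := by
  intro t x y
  -- smoothness of all the pieces
  have hxu := smooth3_dx hu
  have hyu := smooth3_dy hu
  have h_f1 : Smooth3 (Dx (Dx u)) := smooth3_dx hxu
  have h_f2 : Smooth3 (Dx (Dy u)) := smooth3_dx hyu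
  have h_xxx : Smooth3 (Dx (Dx (Dx u))) := smooth3_dx h_f1
  have h_g : Smooth3 (Dy (Dx (Dx (Dx u)))) := smooth3_dy h_xxx
  have h_tx : Smooth3 (Dt (Dx u)) := smooth3_dt hxu
  have h_yy : Smooth3 (Dy (Dy u)) := smooth3_dy hyu
  have h_q : Smooth3 (Dy (Dy (Dy (Dx u)))) := smooth3_dy (smooth3_dy (smooth3_dy hxu))
  -- first divergence term
  have eA : Dx (fun t x y => x * (α * Dx (Dx u) t x y * Dx (Dy u) t x y
      + Dy (Dx (Dx (Dx u))) t x y)) t x y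
      = 1 * (α * Dx (Dx u) t x y * Dx (Dy u) t x y + Dy (Dx (Dx (Dx u))) t x y)
        + x * ((α * Dx (Dx (Dx u)) t x y * Dx (Dy u) t x y
            + α * Dx (Dx u) t x y * Dx (Dx (Dy u)) t x y)
          + Dx (Dy (Dx (Dx (Dx u)))) t x y) := by
    have inner : HasDerivAt
        (fun s => α * Dx (Dx u) t s y * Dx (Dy u) t s y + Dy (Dx (Dx (Dx u))) t s y)
        ((α * Dx (Dx (Dx u)) t x y * Dx (Dy u) t x y
            + α * Dx (Dx u) t x y * Dx (Dx (Dy u)) t x y)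
          + Dx (Dy (Dx (Dx (Dx u)))) t x y) x := by
      have h1 := ((hasDX h_f1 t x y).const_mul α).mul (hasDX h_f2 t x y)
      have h2 := hasDX h_g t x y
      exact h1.add h2
    exact ((hasDerivAt_id x).mul inner).deriv
  -- second divergence term
  have eB : Dy (fun t x y => x * (Dt (Dx u) t x y
        + β * Dx (Dy u) t x y * Dy (Dy u) t x y
        + Dy (Dy (Dy (Dx u))) t x y)
      - Dx (Dx (Dx u)) t x y) t x y
      = x * (Dy (Dt (Dx u)) t x y
          + (β * Dy (Dx (Dy u)) t x y * Dy (Dy u) t x y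
            + β * Dx (Dy u) t x y * Dy (Dy (Dy u)) t x y)
          + Dy (Dy (Dy (Dy (Dx u)))) t x y)
        - Dy (Dx (Dx (Dx u))) t x y := by
    have inner : HasDerivAt
        (fun s => Dt (Dx u) t x s + β * Dx (Dy u) t x s * Dy (Dy u) t x s
          + Dy (Dy (Dy (Dx u))) t x s)
        (Dy (Dt (Dx u)) t x y
          + (β * Dy (Dx (Dy u)) t x y * Dy (Dy u) t x y
            + β * Dx (Dy u) t x y * Dy (Dy (Dy u)) t x y)
          + Dy (Dy (Dy (Dy (Dx u)))) t x y) y := by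
      have h1 := hasDY h_tx t x y
      have h2 := ((hasDY h_f2 t x y).const_mul β).mul (hasDY h_yy t x y)
      have h3 := hasDY h_q t x y
      exact (h1.add h2).add h3
    exact ((inner.const_mul x).sub (hasDY h_xxx t x y)).deriv
  -- products appearing in G
  have eP : Dx (fun t x y => Dx (Dy u) t x y * Dx (Dx u) t x y) t x y
      = Dx (Dx (Dy u)) t x y * Dx (Dx u) t x y
        + Dx (Dy u) t x y * Dx (Dx (Dx u)) t x y :=
    ((hasDX h_f2 t x y).mul (hasDX h_f1 t x y)).deriv
  have eQ : Dy (fun t x y => Dx (Dy u) t x y * Dy (Dy u) t x y) t x y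
      = Dy (Dx (Dy u)) t x y * Dy (Dy u) t x y
        + Dx (Dy u) t x y * Dy (Dy (Dy u)) t x y :=
    ((hasDY h_f2 t x y).mul (hasDY h_yy t x y)).deriv
  -- commutation facts
  have c1 : Dy (Dx (Dx (Dx (Dx u)))) t x y = Dx (Dy (Dx (Dx (Dx u)))) t x y := by
    rw [Dx_Dy_comm h_xxx]
  have c2 : Dt (Dx (Dy u)) t x y = Dy (Dt (Dx u)) t x y := by
    rw [show Dx (Dy u) = Dy (Dx u) from Dx_Dy_comm hu, Dt_Dy_comm hxu]
  rw [hG, eA, eB, eP, eQ, c1, c2]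
  field_simp
  ring
end
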